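/- arXiv:1503.06447 — 6 statements merged into one kernel-verified Lean document; each statement's English description precedes it below -/
import Mathlib

section
/- Let n ≥ r ≥ 1 be integers and let k be a real number with k ∉ {0,1,…,r−1}. Then every polynomial P ∈ ℝ[x_1,…,x_n] of degree at most r can be written as P = P₁ + Σ_{i=1}^n P_{2i}·(x_i² − x_i) + P₃·(Σ_{i=1}^n x_i − k), where P₁ is multilinear and homogeneous of degree r, each P_{2i} has degree at most r−2, and P₃ has degree at most r−1. -/
open Finset MvPolynomial

namespace MHD

variable {n r : ℕ} {k : ℝ}
def deg (m : Fin n →₀ ℕ) : ℕ := ∑ j, m j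
section helpers
lemma deg_eq_sum_support (m : Fin n →₀ ℕ) : deg m = ∑ j ∈ m.support, m j := by
  rw [deg, Finset.sum_subset (Finset.subset_univ m.support)]
  intro j _ hj
  simpa using Finsupp.notMem_support_iff.mp hj
lemma finsupp_degree_eq_deg (m : Fin n →₀ ℕ) : Finsupp.degree m = deg m :=
  (deg_eq_sum_support m).symm
lemma finsupp_sum_eq_deg (m : Fin n →₀ ℕ) : (m.sum fun _ e => e) = deg m :=
  (deg_eq_sum_support m).symm
lemma totalDegree_monomial_le_deg (m : Fin n →₀ ℕ) (c : ℝ) :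
    (monomial m c).totalDegree ≤ deg m := by
  refine le_trans (totalDegree_monomial_le m c) ?_
  rw [← finsupp_sum_eq_deg]; rfl
lemma card_le_deg (m : Fin n →₀ ℕ) : m.support.card ≤ deg m := by
  rw [deg_eq_sum_support]
  calc m.support.card = ∑ _j ∈ m.support, 1 := by simp
  _ ≤ ∑ j ∈ m.support, m j :=
    Finset.sum_le_sum fun j hj => Nat.one_le_iff_ne_zero.mpr (Finsupp.mem_support_iff.mp hj)
lemma deg_eq_card_of_multilinear {m : Fin n →₀ ℕ} (h : ∀ i, m i ≤ 1) :
    deg m = m.support.card := by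
  rw [deg_eq_sum_support]
  calc ∑ j ∈ m.support, m j = ∑ _j ∈ m.support, 1 := by
        refine Finset.sum_congr rfl fun j hj => ?_
        have := h j
        have := Finsupp.mem_support_iff.mp hj
        omega
  _ = m.support.card := by simp
lemma card_lt_deg {m : Fin n →₀ ℕ} {i : Fin n} (h : 2 ≤ m i) :
    m.support.card < deg m := by
  rw [deg_eq_sum_support]
  have hi : i ∈ m.support := Finsupp.mem_support_iff.mpr (by omega)
  calc m.support.card = ∑ _j ∈ m.support, 1 := by simp
  _ < ∑ j ∈ m.support, m j := by
      refine Finset.sum_lt_sum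
        (fun j hj => Nat.one_le_iff_ne_zero.mpr (Finsupp.mem_support_iff.mp hj)) ⟨i, hi, by omega⟩
lemma deg_add (a b : Fin n →₀ ℕ) : deg (a + b) = deg a + deg b := by
  simp [deg, Finset.sum_add_distrib]
lemma deg_single (i : Fin n) (t : ℕ) : deg (Finsupp.single i t) = t := by
  simp [deg, Finsupp.single_apply]
lemma sub_add_single {m : Fin n →₀ ℕ} {i : Fin n} (h : 1 ≤ m i) :
    (m - Finsupp.single i 1) + Finsupp.single i 1 = m := by
  ext j
  simp only [Finsupp.add_apply, Finsupp.coe_tsub, Pi.sub_apply, Finsupp.single_apply]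
  by_cases hj : i = j
  · subst hj; simp only [eq_self_iff_true, if_true]; omega
  · simp [hj]
lemma two_add_sub {m : Fin n →₀ ℕ} {i : Fin n} (h : 1 ≤ m i) :
    Finsupp.single i 2 + (m - Finsupp.single i 1) = m + Finsupp.single i 1 := by
  ext j
  simp only [Finsupp.add_apply, Finsupp.coe_tsub, Pi.sub_apply, Finsupp.single_apply]
  by_cases hj : i = j
  · subst hj; simp only [eq_self_iff_true, if_true]; omega
  · simp [hj]
lemma support_sub_single {m : Fin n →₀ ℕ} {i : Fin n} (h : 2 ≤ m i) :
    (m - Finsupp.single i 1).support = m.support := by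
  ext j
  simp only [Finsupp.mem_support_iff, Finsupp.coe_tsub, Pi.sub_apply, Finsupp.single_apply]
  by_cases hj : i = j
  · subst hj; simp only [eq_self_iff_true, if_true]; omega
  · simp [hj]
lemma deg_sub_single {m : Fin n →₀ ℕ} {i : Fin n} (h : 1 ≤ m i) :
    deg (m - Finsupp.single i 1) + 1 = deg m := by
  conv_rhs => rw [← sub_add_single h]
  rw [deg_add, deg_single]
lemma key_identity {m : Fin n →₀ ℕ} {i : Fin n} (h : 1 ≤ m i) (c : ℝ) :
    monomial (m + Finsupp.single i 1) c
      = (X i ^ 2 - X i) * monomial (m - Finsupp.single i 1) c + monomial m c := by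
  rw [sub_mul, X_pow_eq_monomial, monomial_mul, two_add_sub h,
    show (X i : MvPolynomial (Fin n) ℝ) = monomial (Finsupp.single i 1) 1 from rfl,
    monomial_mul, add_comm (Finsupp.single i 1), sub_add_single h, one_mul,
    sub_add_cancel]
end helpers

def Good (n r : ℕ) (k : ℝ) (P : MvPolynomial (Fin n) ℝ) : Prop :=
  ∃ (P₁ : MvPolynomial (Fin n) ℝ) (P₂ : Fin n → MvPolynomial (Fin n) ℝ)
    (P₃ : MvPolynomial (Fin n) ℝ),
    P = P₁ + (∑ i, P₂ i * (X i ^ 2 - X i)) + P₃ * (∑ i, X i - C k) ∧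
    P₁.IsHomogeneous r ∧
    (∀ m ∈ P₁.support, ∀ i : Fin n, m i ≤ 1) ∧
    (∀ i, P₂ i = 0 ∨ (P₂ i).totalDegree + 2 ≤ r) ∧
    (P₃ = 0 ∨ P₃.totalDegree + 1 ≤ r)

section closure
lemma degOK_add {c : ℕ} {a b : MvPolynomial (Fin n) ℝ}
    (ha : a = 0 ∨ a.totalDegree + c ≤ r) (hb : b = 0 ∨ b.totalDegree + c ≤ r) :
    a + b = 0 ∨ (a + b).totalDegree + c ≤ r := by
  rcases ha with ha | ha
  · simpa [ha] using hb
  rcases hb with hb | hb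
  · simpa [hb] using Or.inr ha
  right
  have h := totalDegree_add a b
  have h2 : max a.totalDegree b.totalDegree + c ≤ r := by
    rcases max_cases a.totalDegree b.totalDegree with ⟨h1, _⟩ | ⟨h1, _⟩ <;> omega
  omega
lemma degOK_smul {c : ℕ} {a : MvPolynomial (Fin n) ℝ} (t : ℝ)
    (ha : a = 0 ∨ a.totalDegree + c ≤ r) :
    t • a = 0 ∨ (t • a).totalDegree + c ≤ r := by
  rcases ha with ha | ha
  · simp [ha]
  · right
    have := totalDegree_smul_le t a
    omega
lemma good_zero : Good n r k 0 :=
  ⟨0, 0, 0, by simp, isHomogeneous_zero _ _ _, by simp, fun i => Or.inl rfl, Or.inl rfl⟩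
lemma good_add {P Q : MvPolynomial (Fin n) ℝ} (hP : Good n r k P) (hQ : Good n r k Q) :
    Good n r k (P + Q) := by
  obtain ⟨P₁, P₂, P₃, hPe, hP1, hP1m, hP2, hP3⟩ := hP
  obtain ⟨Q₁, Q₂, Q₃, hQe, hQ1, hQ1m, hQ2, hQ3⟩ := hQ
  refine ⟨P₁ + Q₁, fun i => P₂ i + Q₂ i, P₃ + Q₃, ?_, hP1.add hQ1, ?_,
    fun i => degOK_add (hP2 i) (hQ2 i), degOK_add hP3 hQ3⟩
  · rw [hPe, hQe]
    simp only [add_mul, Finset.sum_add_distrib]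
    ring
  · intro m hm i
    rcases Finset.mem_union.mp (support_add hm) with h | h
    · exact hP1m m h i
    · exact hQ1m m h i
lemma good_smul {P : MvPolynomial (Fin n) ℝ} (t : ℝ) (hP : Good n r k P) :
    Good n r k (t • P) := by
  obtain ⟨P₁, P₂, P₃, hPe, hP1, hP1m, hP2, hP3⟩ := hP
  refine ⟨t • P₁, fun i => t • P₂ i, t • P₃, ?_, ?_, ?_,
    fun i => degOK_smul t (hP2 i), degOK_smul t hP3⟩
  · rw [hPe]
    simp only [smul_add, smul_mul_assoc, Finset.smul_sum]
  · rw [← mem_homogeneousSubmodule] at hP1 ⊢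
    exact Submodule.smul_mem _ t hP1
  · intro m hm i
    exact hP1m m (support_smul hm) i
lemma good_neg {P : MvPolynomial (Fin n) ℝ} (hP : Good n r k P) : Good n r k (-P) := by
  have := good_smul (-1 : ℝ) hP
  simpa using this
lemma good_sub {P Q : MvPolynomial (Fin n) ℝ} (hP : Good n r k P) (hQ : Good n r k Q) :
    Good n r k (P - Q) := by
  rw [sub_eq_add_neg]
  exact good_add hP (good_neg hQ)
lemma good_sum {ι : Type*} (s : Finset ι) (f : ι → MvPolynomial (Fin n) ℝ)
    (h : ∀ j ∈ s, Good n r k (f j)) : Good n r k (∑ j ∈ s, f j) := by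
  classical
  induction s using Finset.induction_on with
  | empty => simpa using good_zero
  | insert _ _ hj ih =>
    rw [Finset.sum_insert hj]
    exact good_add (h _ (Finset.mem_insert_self _ _))
      (ih fun j hjs => h j (Finset.mem_insert_of_mem hjs))
lemma good_sq_mul (i : Fin n) (Q : MvPolynomial (Fin n) ℝ)
    (h : Q = 0 ∨ Q.totalDegree + 2 ≤ r) : Good n r k (Q * (X i ^ 2 - X i)) := by
  classical
  refine ⟨0, fun j => if j = i then Q else 0, 0, ?_, isHomogeneous_zero _ _ _, by simp,
    ?_, Or.inl rfl⟩
  · simp [ite_mul]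
  · intro j
    by_cases hj : j = i
    · simpa [hj] using h
    · simp [hj]
lemma good_lin_mul (Q : MvPolynomial (Fin n) ℝ)
    (h : Q = 0 ∨ Q.totalDegree + 1 ≤ r) : Good n r k (Q * (∑ i, X i - C k)) :=
  ⟨0, 0, Q, by simp, isHomogeneous_zero _ _ _, by simp, fun i => Or.inl rfl, h⟩
end closure

lemma good_monomial (hr : 1 ≤ r) (hk : ∀ i : ℕ, i < r → (i : ℝ) ≠ k) :
    ∀ N : ℕ, ∀ m : Fin n →₀ ℕ,
      (deg m - m.support.card) * (r + 1) + (r - deg m) ≤ N →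
      deg m ≤ r → ∀ c : ℝ, Good n r k (monomial m c) := by
  intro N
  induction N using Nat.strong_induction_on with
  | _ N IH =>
  intro m hμ hd c
  by_cases hml : ∀ i, m i ≤ 1
  · by_cases hdr : deg m = r
    · -- multilinear homogeneous of degree r : done directly
      refine ⟨monomial m c, 0, 0, by simp, isHomogeneous_monomial c ?_, ?_,
        fun i => Or.inl rfl, Or.inl rfl⟩
      · rw [finsupp_degree_eq_deg, hdr]
      · intro m' hm' i
        have h' : m' = m := by
          by_cases hc : c = 0
          · simp [hc] at hm'
          · rw [support_monomial, if_neg hc] at hm'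
            exact Finset.mem_singleton.mp hm'
        rw [h']
        exact hml i
    · -- multilinear of degree < r : raise degree using (∑ X i - C k)
      classical
      have hdlt : deg m < r := lt_of_le_of_ne hd hdr
      set S := m.support with hS
      have hcard : deg m = S.card := deg_eq_card_of_multilinear hml
      have hz0 : deg m - S.card = 0 := by omega
      rw [hz0, zero_mul, zero_add] at hμ
      have hα : ((S.card : ℝ) - k) ≠ 0 :=
        sub_ne_zero.mpr (hk S.card (by omega))
      have hmem1 : ∀ j ∈ S, 1 ≤ m j := fun j hj =>
        Nat.one_le_iff_ne_zero.mpr (Finsupp.mem_support_iff.mp hj)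
      -- step 0
      have step0 : monomial m c * (∑ j, X j - C k)
          = (∑ j : Fin n, monomial (m + Finsupp.single j 1) c) - k • monomial m c := by
        rw [mul_sub, Finset.mul_sum]
        congr 1
        · refine Finset.sum_congr rfl fun j _ => ?_
          rw [show (X j : MvPolynomial (Fin n) ℝ) = monomial (Finsupp.single j 1) 1 from rfl,
            monomial_mul, mul_one]
        · rw [smul_eq_C_mul, mul_comm]
      have step2 : (∑ j ∈ S, monomial (m + Finsupp.single j 1) c)
          = (∑ j ∈ S, (X j ^ 2 - X j) * monomial (m - Finsupp.single j 1) c)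
            + S.card • monomial m c := by
        rw [Finset.sum_congr rfl (fun j hj => key_identity (hmem1 j hj) c),
          Finset.sum_add_distrib, Finset.sum_const]
      have hsub : monomial m c * (∑ j, X j - C k)
            - (∑ j ∈ Sᶜ, monomial (m + Finsupp.single j 1) c)
            - (∑ j ∈ S, (X j ^ 2 - X j) * monomial (m - Finsupp.single j 1) c)
          = ((S.card : ℝ) - k) • monomial m c := by
        rw [step0, ← Finset.sum_add_sum_compl S (fun j => monomial (m + Finsupp.single j 1) c),
          step2, sub_smul, Nat.cast_smul_eq_nsmul]
        abel
      have hE : monomial m c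
          = ((S.card : ℝ) - k)⁻¹ • (monomial m c * (∑ j, X j - C k)
            - (∑ j ∈ Sᶜ, monomial (m + Finsupp.single j 1) c)
            - (∑ j ∈ S, (X j ^ 2 - X j) * monomial (m - Finsupp.single j 1) c)) := by
        rw [hsub, smul_smul, inv_mul_cancel₀ hα, one_smul]
      rw [hE]
      refine good_smul _ (good_sub (good_sub ?_ ?_) ?_)
      · refine good_lin_mul _ (Or.inr ?_)
        have := totalDegree_monomial_le_deg m c
        omega
      · refine good_sum _ _ fun j hj => ?_
        have hj0 : m j = 0 :=
          Finsupp.notMem_support_iff.mp (by simpa [hS] using Finset.mem_compl.mp hj)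
        have hml' : ∀ i, (m + Finsupp.single j 1 : Fin n →₀ ℕ) i ≤ 1 := by
          intro i
          by_cases hij : i = j
          · subst hij
            simp [Finsupp.single_apply, hj0]
          · have := hml i
            simp only [Finsupp.add_apply, Finsupp.single_apply]
            rw [if_neg (fun h => hij h.symm)]
            omega
        have hdeg' : deg (m + Finsupp.single j 1) = deg m + 1 := by
          rw [deg_add, deg_single]
        have hcard' : deg (m + Finsupp.single j 1) = (m + Finsupp.single j 1).support.card :=
          deg_eq_card_of_multilinear hml'
        refine IH (r - deg m - 1) (by omega) _ ?_ (by omega) c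
        have hz : deg (m + Finsupp.single j 1) - (m + Finsupp.single j 1).support.card = 0 := by
          omega
        rw [hz, zero_mul, zero_add, hdeg']
        omega
      · refine good_sum _ _ fun j hj => ?_
        rw [mul_comm]
        refine good_sq_mul _ _ (Or.inr ?_)
        have h1 := deg_sub_single (hmem1 j hj)
        have h2 := totalDegree_monomial_le_deg (m - Finsupp.single j 1) c
        have h3 : 1 ≤ deg m := by
          have := hmem1 j hj
          have := Finsupp.le_degree j m
          rw [finsupp_degree_eq_deg] at this
          omega
        omega
  · -- not multilinear : reduce an exponent using x_i^2 - x_i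
    push_neg at hml
    obtain ⟨i, hi⟩ := hml
    have hi2 : 2 ≤ m i := hi
    have hm1 : 1 ≤ m i := by omega
    set m' := m - Finsupp.single i 1 with hm'
    have hm'i : 1 ≤ m' i := by
      simp only [hm', Finsupp.coe_tsub, Pi.sub_apply, Finsupp.single_apply,
        eq_self_iff_true, if_true]
      omega
    have hdm' : deg m' + 1 = deg m := deg_sub_single hm1
    have hsupp : m'.support = m.support := support_sub_single hi2
    have hclt : m.support.card < deg m := card_lt_deg hi2
    have hcle : m.support.card ≤ deg m' := by
      have := card_le_deg m'
      rw [hsupp] at this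
      exact this
    have heq : monomial m c
        = (X i ^ 2 - X i) * monomial (m' - Finsupp.single i 1) c + monomial m' c := by
      rw [← key_identity hm'i c, sub_add_single hm1]
    rw [heq]
    refine good_add ?_ ?_
    · rw [mul_comm]
      refine good_sq_mul _ _ (Or.inr ?_)
      have h1 := deg_sub_single hm'i
      have h2 := totalDegree_monomial_le_deg (m' - Finsupp.single i 1) c
      omega
    · -- inductive call on m'
      have hμ' : (deg m' - m'.support.card) * (r + 1) + (r - deg m')
          < (deg m - m.support.card) * (r + 1) + (r - deg m) := by
        rw [hsupp]
        have h1 : deg m' - m.support.card + 1 = deg m - m.support.card := by omega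
        have : (deg m' - m.support.card) * (r + 1) + (r + 1)
            = (deg m - m.support.card) * (r + 1) := by
          rw [← h1, add_mul, one_mul]
        omega
      exact IH ((deg m' - m'.support.card) * (r + 1) + (r - deg m')) (by omega) _ le_rfl
        (by omega) c

end MHD

/-- Let `n ≥ r ≥ 1` and let `k ∈ ℝ` with `k ∉ {0,1,…,r−1}`. Every
polynomial `P ∈ ℝ[x₁,…,x_n]` of degree at most `r` can be written as
`P = P₁ + Σᵢ P₂ᵢ·(xᵢ² − xᵢ) + P₃·(Σᵢ xᵢ − k)` where `P₁` is multilinear (every variable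
has individual degree at most one) and homogeneous of degree `r`, each `P₂ᵢ` has degree
at most `r − 2` (i.e. is zero or has `totalDegree + 2 ≤ r`), and `P₃` has degree at most
`r − 1` (i.e. is zero or has `totalDegree + 1 ≤ r`). -/
theorem multilinear_homogeneous_decomposition (n r : ℕ) (hr : 1 ≤ r) (hrn : r ≤ n)
    (k : ℝ) (hk : ∀ i : ℕ, i < r → (i : ℝ) ≠ k)
    (P : MvPolynomial (Fin n) ℝ) (hP : P.totalDegree ≤ r) :
    ∃ (P₁ : MvPolynomial (Fin n) ℝ) (P₂ : Fin n → MvPolynomial (Fin n) ℝ)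
      (P₃ : MvPolynomial (Fin n) ℝ),
      P = P₁ + (∑ i, P₂ i * (X i ^ 2 - X i)) + P₃ * (∑ i, X i - C k) ∧
      P₁.IsHomogeneous r ∧
      (∀ m ∈ P₁.support, ∀ i : Fin n, m i ≤ 1) ∧
      (∀ i, P₂ i = 0 ∨ (P₂ i).totalDegree + 2 ≤ r) ∧
      (P₃ = 0 ∨ P₃.totalDegree + 1 ≤ r) := by
  have hG : MHD.Good n r k (∑ m ∈ P.support, monomial m (coeff m P)) := by
    refine MHD.good_sum _ _ fun m hm => ?_
    refine MHD.good_monomial hr hk _ m le_rfl ?_ _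
    rw [← MHD.finsupp_sum_eq_deg]
    exact le_trans (le_totalDegree hm) hP
  rw [← P.as_sum] at hG
  exact hG
end

section
/- Let G be a graph on [n] and let r, k be positive integers with 2r ≤ n. If the matrix M' is positive semidefinite, then the matrix M_G is positive semidefinite. -/
open Finset

/-- `deg_G(I)`: the number of sets `S ⊆ [n]` with `I ⊆ S`, `|S| = 2r`, and `S` a clique
of `G`. -/
noncomputable def degG {n : ℕ} (G : SimpleGraph (Fin n)) (r : ℕ) (I : Finset (Fin n)) : ℕ :=
  Nat.card {S : Finset (Fin n) // I ⊆ S ∧ S.card = 2 * r ∧ G.IsClique (S : Set (Fin n))}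

/-- The matrix `M_G`, indexed by the `r`-element subsets of `[n]`, with
`M_G(I,J) = deg_G(I∪J) · C(k,|I∪J|)/C(2r,|I∪J|)`. -/
noncomputable def MG {n : ℕ} (G : SimpleGraph (Fin n)) (r k : ℕ) :
    Matrix {I : Finset (Fin n) // I.card = r} {I : Finset (Fin n) // I.card = r} ℝ :=
  fun I J => (degG G r (I.1 ∪ J.1) : ℝ) * (Nat.choose k (I.1 ∪ J.1).card : ℝ)
      / (Nat.choose (2 * r) (I.1 ∪ J.1).card : ℝ)

/-- `β(i) = C(k,2r−i)/C(2r,2r−i)`. -/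
noncomputable def betaCoeff (r k i : ℕ) : ℝ :=
  (Nat.choose k (2 * r - i) : ℝ) / (Nat.choose (2 * r) (2 * r - i) : ℝ)

/-- Every pair in `E(T) ∖ (E(I) ∪ E(J))` is an edge of `G`: every two distinct vertices
of `T` that do not both lie in `I` nor both lie in `J` are adjacent in `G`. -/
def pairsPresent {n : ℕ} (G : SimpleGraph (Fin n)) (T I J : Finset (Fin n)) : Prop :=
  ∀ u v : Fin n, u ∈ T → v ∈ T → u ≠ v →
    ¬(u ∈ I ∧ v ∈ I) → ¬(u ∈ J ∧ v ∈ J) → G.Adj u v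

open scoped Classical in
/-- The matrix `M_T`: `M_T(I,J) = β(|I∩J|)` if `I ∪ J ⊆ T` and every pair in
`E(T) ∖ (E(I) ∪ E(J))` is an edge of `G`, and `0` otherwise. -/
noncomputable def MTmat {n : ℕ} (G : SimpleGraph (Fin n)) (r k : ℕ) (T : Finset (Fin n)) :
    Matrix {I : Finset (Fin n) // I.card = r} {I : Finset (Fin n) // I.card = r} ℝ :=
  fun I J =>
    if I.1 ∪ J.1 ⊆ T ∧ pairsPresent G T I.1 J.1 then betaCoeff r k (I.1 ∩ J.1).card else 0

/-- `M' = Σ_{T ⊆ [n], |T| = 2r} M_T`. -/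
noncomputable def Mprime {n : ℕ} (G : SimpleGraph (Fin n)) (r k : ℕ) :
    Matrix {I : Finset (Fin n) // I.card = r} {I : Finset (Fin n) // I.card = r} ℝ :=
  ∑ T ∈ Finset.univ.filter (fun T : Finset (Fin n) => T.card = 2 * r), MTmat G r k T

open scoped Classical in
lemma degG_eq_card {n : ℕ} (G : SimpleGraph (Fin n)) (r : ℕ) (K : Finset (Fin n)) :
    degG G r K = (Finset.univ.filter
      (fun S : Finset (Fin n) => K ⊆ S ∧ S.card = 2 * r ∧ G.IsClique (S : Set (Fin n)))).card := by
  classical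
  rw [degG, Nat.card_eq_fintype_card, Fintype.card_subtype]

/-- For a graph `G` on `[n]` and positive integers `r, k` with `2r ≤ n`,
if `M'` is positive semidefinite then `M_G` is positive semidefinite. -/
theorem MG_posSemidef_of_Mprime_posSemidef {n : ℕ} (G : SimpleGraph (Fin n)) (r k : ℕ)
    (hr : 1 ≤ r) (hk : 1 ≤ k) (hrn : 2 * r ≤ n)
    (h : (Mprime G r k).PosSemidef) : (MG G r k).PosSemidef := by
  classical
  set d : {I : Finset (Fin n) // I.card = r} → ℝ :=
    fun I => if G.IsClique (I.1 : Set (Fin n)) then 1 else 0 with hd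
  have key : MG G r k = Matrix.diagonal d * Mprime G r k * Matrix.diagonal d := by
    ext I J
    rw [Matrix.mul_diagonal, Matrix.diagonal_mul]
    by_cases hI : G.IsClique (I.1 : Set (Fin n))
    · by_cases hJ : G.IsClique (J.1 : Set (Fin n))
      · have hdI : d I = 1 := if_pos hI
        have hdJ : d J = 1 := if_pos hJ
        rw [hdI, hdJ, one_mul, mul_one]
        -- now show MG I J = Mprime I J
        have hsum : Mprime G r k I J
            = ∑ T ∈ Finset.univ.filter (fun T : Finset (Fin n) => T.card = 2 * r),
                MTmat G r k T I J := by
          rw [Mprime, Matrix.sum_apply]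
        have hfilter : ((Finset.univ.filter (fun T : Finset (Fin n) => T.card = 2 * r)).filter
            (fun T => I.1 ∪ J.1 ⊆ T ∧ pairsPresent G T I.1 J.1))
            = Finset.univ.filter (fun S : Finset (Fin n) =>
                I.1 ∪ J.1 ⊆ S ∧ S.card = 2 * r ∧ G.IsClique (S : Set (Fin n))) := by
          ext T
          simp only [Finset.mem_filter, Finset.mem_univ, true_and]
          constructor
          · rintro ⟨hc, hsub, hpp⟩
            refine ⟨hsub, hc, ?_⟩
            intro u hu v hv hne
            by_cases huvI : u ∈ I.1 ∧ v ∈ I.1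
            · exact hI huvI.1 huvI.2 hne
            · by_cases huvJ : u ∈ J.1 ∧ v ∈ J.1
              · exact hJ huvJ.1 huvJ.2 hne
              · exact hpp u v hu hv hne huvI huvJ
          · rintro ⟨hsub, hc, hclique⟩
            refine ⟨hc, hsub, ?_⟩
            intro u v hu hv hne _ _
            exact hclique hu hv hne
        have hsum2 : Mprime G r k I J
            = ((Finset.univ.filter (fun S : Finset (Fin n) =>
                I.1 ∪ J.1 ⊆ S ∧ S.card = 2 * r ∧ G.IsClique (S : Set (Fin n)))).card : ℝ)
              * betaCoeff r k (I.1 ∩ J.1).card := by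
          rw [hsum]
          simp only [MTmat]
          rw [← Finset.sum_filter, hfilter, Finset.sum_const, nsmul_eq_mul]
        have hcards : (I.1 ∪ J.1).card + (I.1 ∩ J.1).card = 2 * r := by
          have := Finset.card_union_add_card_inter I.1 J.1
          rw [I.2, J.2] at this
          omega
        have hbeta : betaCoeff r k (I.1 ∩ J.1).card
            = (Nat.choose k (I.1 ∪ J.1).card : ℝ)
              / (Nat.choose (2 * r) (I.1 ∪ J.1).card : ℝ) := by
          rw [betaCoeff, show 2 * r - (I.1 ∩ J.1).card = (I.1 ∪ J.1).card by omega]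
        rw [hsum2, hbeta, MG, degG_eq_card, mul_div_assoc]
      · have hdJ : d J = 0 := if_neg hJ
        have hdeg : degG G r (I.1 ∪ J.1) = 0 := by
          rw [degG_eq_card, Finset.card_eq_zero, Finset.filter_eq_empty_iff]
          rintro S - ⟨hsub, -, hclique⟩
          exact hJ (hclique.subset (Finset.coe_subset.mpr
            (Finset.subset_union_right.trans hsub)))
        rw [hdJ, mul_zero, MG, hdeg]
        simp
    · have hdI : d I = 0 := if_neg hI
      have hdeg : degG G r (I.1 ∪ J.1) = 0 := by
        rw [degG_eq_card, Finset.card_eq_zero, Finset.filter_eq_empty_iff]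
        rintro S - ⟨hsub, -, hclique⟩
        exact hI (hclique.subset (Finset.coe_subset.mpr
          (Finset.subset_union_left.trans hsub)))
      rw [hdI, zero_mul, zero_mul, MG, hdeg]
      simp
  have hstar : (Matrix.diagonal d).conjTranspose = Matrix.diagonal d := by
    simp [Matrix.diagonal_conjTranspose, Pi.star_def]
  have final := h.conjTranspose_mul_mul_same (Matrix.diagonal d)
  rw [hstar] at final
  rwa [key]
end

section
/- Let n, r, k be positive integers with 2r ≤ n and r < min(k, n−k). Then the real matrix E with rows and columns indexed by the subsets I, J ⊆ [n] of size at most r, defined by E(I,J) = C(n−|I∪J|, 2r−|I∪J|) · (C(k,|I∪J|)/C(2r,|I∪J|)) · 2^{−C(2r,2)}, is positive semidefinite. -/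
open Finset

/-- The expectation matrix `E`, indexed by the subsets of `[n]` of size at most `r`:
`E(I,J) = C(n−|I∪J|, 2r−|I∪J|) · (C(k,|I∪J|)/C(2r,|I∪J|)) · 2^{−C(2r,2)}`. -/
noncomputable def Emat (n r k : ℕ) :
    Matrix {S : Finset (Fin n) // S.card ≤ r} {S : Finset (Fin n) // S.card ≤ r} ℝ :=
  fun I J =>
    (Nat.choose (n - (I.1 ∪ J.1).card) (2 * r - (I.1 ∪ J.1).card) : ℝ)
      * ((Nat.choose k (I.1 ∪ J.1).card : ℝ) / (Nat.choose (2 * r) (I.1 ∪ J.1).card : ℝ))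
      * ((2 : ℝ) ^ (Nat.choose (2 * r) 2))⁻¹

/-- Number of `k`-element subsets of a finite type containing a fixed set `U`. -/
lemma count_supersets {α : Type*} [Fintype α] [DecidableEq α] (U : Finset α) (k : ℕ)
    (hUk : U.card ≤ k) :
    ((univ.powersetCard k).filter (fun T => U ⊆ T)).card
      = (Fintype.card α - U.card).choose (k - U.card) := by
  rw [← Finset.card_compl U, ← card_powersetCard (k - U.card) Uᶜ]
  apply card_nbij' (i := fun T => T \ U) (j := fun T => T ∪ U)
  · intro T hT
    simp only [mem_coe, mem_filter, mem_powersetCard] at hT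
    obtain ⟨⟨_, hcard⟩, hUT⟩ := hT
    simp only [mem_coe, mem_powersetCard]
    constructor
    · intro x hx
      simp only [mem_sdiff] at hx
      simp [hx.2]
    · rw [card_sdiff_of_subset hUT, hcard]
  · intro T hT
    simp only [mem_coe, mem_powersetCard] at hT
    obtain ⟨hTc, hcard⟩ := hT
    have hdisj : Disjoint T U := by
      rw [Finset.disjoint_left]
      intro x hx
      have := hTc hx
      simpa using this
    simp only [mem_coe, mem_filter, mem_powersetCard]
    refine ⟨⟨subset_univ _, ?_⟩, subset_union_right⟩
    rw [card_union_of_disjoint hdisj, hcard]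
    omega
  · intro T hT
    simp only [mem_coe, mem_filter, mem_powersetCard] at hT
    exact sdiff_union_of_subset hT.2
  · intro T hT
    simp only [mem_coe, mem_powersetCard] at hT
    have hdisj : Disjoint T U := by
      rw [Finset.disjoint_left]
      intro x hx
      have := hT.1 hx
      simpa using this
    show (T ∪ U) \ U = T
    rw [union_sdiff_right, sdiff_eq_self_of_disjoint hdisj]

/-- Trinomial revision identity used for the key decomposition. -/
lemma nat_choose_id {n r k m : ℕ} (hm2r : m ≤ 2 * r) (hrn : 2 * r ≤ n)
    (hmk : m ≤ k) (hkn : k ≤ n) :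
    (n - m).choose (2 * r - m) * k.choose m * n.choose k
      = n.choose (2 * r) * (n - m).choose (k - m) * (2 * r).choose m := by
  have h1 := Nat.choose_mul (n := n) hm2r
  have h2 := Nat.choose_mul (n := n) hmk
  have hpos : 0 < n.choose m := Nat.choose_pos (le_trans hmk hkn)
  apply Nat.eq_of_mul_eq_mul_left hpos
  calc n.choose m * ((n - m).choose (2 * r - m) * k.choose m * n.choose k)
      = (n.choose m * (n - m).choose (2 * r - m)) * (n.choose k * k.choose m) := by ring
    _ = (n.choose (2 * r) * (2 * r).choose m) * (n.choose m * (n - m).choose (k - m)) := by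
        rw [← h1, h2]
    _ = n.choose m * (n.choose (2 * r) * (n - m).choose (k - m) * (2 * r).choose m) := by ring

/-- For positive integers `n, r, k` with `2r ≤ n` and
`r < min(k, n−k)`, the matrix `E` is positive semidefinite. -/
theorem Emat_posSemidef (n r k : ℕ) (hn : 1 ≤ n) (hr : 1 ≤ r) (hk : 1 ≤ k)
    (hrn : 2 * r ≤ n) (hrk : r < k) (hrnk : r < n - k) :
    (Emat n r k).PosSemidef := by
  classical
  have hkn : k ≤ n := by omega
  set β : ℝ := ((2 : ℝ) ^ (Nat.choose (2 * r) 2))⁻¹ with hβ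
  have hβpos : 0 < β := by positivity
  set c : ℝ := (Nat.choose n (2 * r) : ℝ) / (Nat.choose n k : ℝ) * β with hc
  have hcpos : 0 ≤ c := by positivity
  -- indicator function
  set e : {S : Finset (Fin n) // S.card ≤ r} → Finset (Fin n) → ℝ :=
    fun I T => if I.1 ⊆ T then 1 else 0 with he
  -- key decomposition
  have key : ∀ I J, Emat n r k I J
      = c * ∑ T ∈ (univ : Finset (Fin n)).powersetCard k, e I T * e J T := by
    intro I J
    set U : Finset (Fin n) := I.1 ∪ J.1 with hU
    have hm2r : U.card ≤ 2 * r := by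
      have h0 := Finset.card_union_le I.1 J.1
      have h1 := I.2; have h2 := J.2
      rw [hU]
      omega
    have hsum : ∑ T ∈ (univ : Finset (Fin n)).powersetCard k, e I T * e J T
        = (((univ.powersetCard k).filter (fun T => U ⊆ T)).card : ℝ) := by
      rw [Finset.card_filter]
      push_cast
      apply Finset.sum_congr rfl
      intro T _
      simp only [he, hU]
      by_cases h1 : I.1 ⊆ T <;> by_cases h2 : J.1 ⊆ T <;>
        simp [h1, h2, Finset.union_subset_iff]
    rw [hsum]
    rcases le_or_gt U.card k with hmk | hmk
    · rw [count_supersets U k hmk, Fintype.card_fin]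
      have hid := nat_choose_id hm2r hrn hmk hkn
      have hnk : (Nat.choose n k : ℝ) ≠ 0 := by
        exact_mod_cast (Nat.choose_pos hkn).ne'
      have h2rm : (Nat.choose (2 * r) U.card : ℝ) ≠ 0 := by
        exact_mod_cast (Nat.choose_pos hm2r).ne'
      have hidR : ((n - U.card).choose (2 * r - U.card) : ℝ) * k.choose U.card * n.choose k
          = n.choose (2 * r) * (n - U.card).choose (k - U.card) * (2 * r).choose U.card := by
        exact_mod_cast congrArg (Nat.cast : ℕ → ℝ) hid
      show ((n - U.card).choose (2 * r - U.card) : ℝ)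
          * ((k.choose U.card : ℝ) / ((2 * r).choose U.card : ℝ)) * β
          = (n.choose (2 * r) : ℝ) / (n.choose k : ℝ) * β
            * ((n - U.card).choose (k - U.card) : ℝ)
      field_simp
      linear_combination hidR
    · have hzero : (Nat.choose k U.card : ℝ) = 0 := by
        exact_mod_cast Nat.choose_eq_zero_of_lt hmk
      have hcard0 : ((univ.powersetCard k).filter (fun T => U ⊆ T)).card = 0 := by
        rw [Finset.card_eq_zero, Finset.filter_eq_empty_iff]
        intro T hT hUT
        rw [mem_powersetCard] at hT
        have := Finset.card_le_card hUT
        omega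
      show ((n - U.card).choose (2 * r - U.card) : ℝ)
          * ((k.choose U.card : ℝ) / ((2 * r).choose U.card : ℝ)) * β = _
      rw [hzero, hcard0]
      simp
  rw [Matrix.posSemidef_iff_dotProduct_mulVec]
  constructor
  · -- Hermitian
    ext I J
    simp only [Matrix.conjTranspose_apply, star_trivial, Emat]
    rw [Finset.union_comm J.1 I.1]
  · intro x
    have hx : star x = x := by
      funext i; exact star_trivial _
    rw [hx]
    have hquad : dotProduct x (Matrix.mulVec (Emat n r k) x)
        = c * ∑ T ∈ (univ : Finset (Fin n)).powersetCard k,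
            (∑ I, e I T * x I) ^ 2 := by
      simp only [dotProduct, Matrix.mulVec]
      calc ∑ I, x I * ∑ J, Emat n r k I J * x J
          = ∑ I, ∑ J, ∑ T ∈ (univ : Finset (Fin n)).powersetCard k,
              c * ((e I T * x I) * (e J T * x J)) := by
            apply Finset.sum_congr rfl; intro I _
            rw [Finset.mul_sum]
            apply Finset.sum_congr rfl; intro J _
            rw [key I J]
            simp only [Finset.mul_sum, Finset.sum_mul]
            apply Finset.sum_congr rfl; intro T _
            ring
        _ = ∑ I, ∑ T ∈ (univ : Finset (Fin n)).powersetCard k,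
              ∑ J, c * ((e I T * x I) * (e J T * x J)) := by
            apply Finset.sum_congr rfl; intro I _
            exact Finset.sum_comm
        _ = ∑ T ∈ (univ : Finset (Fin n)).powersetCard k,
              ∑ I, ∑ J, c * ((e I T * x I) * (e J T * x J)) := Finset.sum_comm
        _ = c * ∑ T ∈ (univ : Finset (Fin n)).powersetCard k,
              (∑ I, e I T * x I) ^ 2 := by
            simp only [Finset.mul_sum, sq, Finset.sum_mul]
            apply Finset.sum_congr rfl; intro T _
            apply Finset.sum_congr rfl; intro I _
            apply Finset.sum_congr rfl; intro J _
            ring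
    rw [hquad]
    apply mul_nonneg hcpos
    apply Finset.sum_nonneg
    intro T _
    positivity
end

section
/- Let n, r, k be positive integers with 2r ≤ n and r ≤ k, and let E be the real matrix with rows and columns indexed by the subsets I, J ⊆ [n] of size at most r, defined by E(I,J) = C(n−|I∪J|, 2r−|I∪J|) · (C(k,|I∪J|)/C(2r,|I∪J|)) · 2^{−C(2r,2)}. Then the kernel of E has dimension at least Σ_{i=0}^{r−1} C(n,i). -/
open Finset

/-- The entry function of `Emat` as a function of `|I ∪ J|`. -/
noncomputable def fE (n r k m : ℕ) : ℝ :=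
  (Nat.choose (n - m) (2 * r - m) : ℝ)
    * ((Nat.choose k m : ℝ) / (Nat.choose (2 * r) m : ℝ))
    * ((2 : ℝ) ^ (Nat.choose (2 * r) 2))⁻¹

lemma fE_eq (n r k m : ℕ) (hm : m ≤ 2 * r) (hrn : 2 * r ≤ n) :
    fE n r k m = ((n.choose (2 * r) : ℝ) / (n.choose m : ℝ)) * (k.choose m : ℝ)
      * ((2 : ℝ) ^ (Nat.choose (2 * r) 2))⁻¹ := by
  have key : n.choose (2 * r) * (2 * r).choose m = n.choose m * (n - m).choose (2 * r - m) :=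
    Nat.choose_mul hm
  have h2rm : (0:ℝ) < ((2 * r).choose m : ℝ) := by
    exact_mod_cast Nat.choose_pos hm
  have hnm : (0:ℝ) < (n.choose m : ℝ) := by
    exact_mod_cast Nat.choose_pos (hm.trans hrn)
  unfold fE
  have keyR : (n.choose (2 * r) : ℝ) * ((2 * r).choose m : ℝ)
      = (n.choose m : ℝ) * ((n - m).choose (2 * r - m) : ℝ) := by exact_mod_cast key
  field_simp
  linear_combination (-(k.choose m : ℝ)) * keyR

lemma fE_zero (n r k m : ℕ) (h : k < m) : fE n r k m = 0 := by
  unfold fE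
  rw [Nat.choose_eq_zero_of_lt h]
  simp

/-- The key ratio identity: `(m-i)·f(m) + (n-m)·f(m+1) = (k-i)·f(m)`. -/
lemma fE_ratio (n r k m i : ℕ) (hrn : 2 * r ≤ n) (hrk : r ≤ k) (hi : i ≤ m) (hik : i ≤ k)
    (hm : m < 2 * r) :
    ((m - i : ℕ) : ℝ) * fE n r k m + ((n - m : ℕ) : ℝ) * fE n r k (m + 1)
      = ((k - i : ℕ) : ℝ) * fE n r k m := by
  rcases le_or_gt m k with hmk | hmk
  · -- main case: need (n-m)·f(m+1) = (k-m)·f(m)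
    have hstep : ((n - m : ℕ) : ℝ) * fE n r k (m + 1) = ((k - m : ℕ) : ℝ) * fE n r k m := by
      rw [fE_eq n r k m hm.le hrn, fE_eq n r k (m+1) hm hrn]
      have h1 : k.choose (m+1) * (m+1) = k.choose m * (k - m) := Nat.choose_succ_right_eq k m
      have h2 : n.choose (m+1) * (m+1) = n.choose m * (n - m) := Nat.choose_succ_right_eq n m
      have hnm : (0:ℝ) < (n.choose m : ℝ) := by
        exact_mod_cast Nat.choose_pos (hm.le.trans hrn)
      have hnm1 : (0:ℝ) < (n.choose (m+1) : ℝ) := by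
        exact_mod_cast Nat.choose_pos (hm.trans_le hrn)
      -- cross-multiplied natural identity
      have key : (n - m) * k.choose (m+1) * n.choose m = (k - m) * k.choose m * n.choose (m+1) := by
        have := congrArg (· * (k.choose m * (k - m))) h2
        calc (n - m) * k.choose (m+1) * n.choose m
            = (n.choose m * (n - m)) * k.choose (m+1) := by ring
          _ = (n.choose (m+1) * (m+1)) * k.choose (m+1) := by rw [h2]
          _ = n.choose (m+1) * (k.choose (m+1) * (m+1)) := by ring
          _ = n.choose (m+1) * (k.choose m * (k - m)) := by rw [h1]
          _ = (k - m) * k.choose m * n.choose (m+1) := by ring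
      have keyR : ((n - m : ℕ) : ℝ) * (k.choose (m+1) : ℝ) * (n.choose m : ℝ)
          = ((k - m : ℕ) : ℝ) * (k.choose m : ℝ) * (n.choose (m+1) : ℝ) := by exact_mod_cast key
      rw [Nat.cast_sub hmk, Nat.cast_sub (hm.le.trans hrn)] at keyR ⊢
      field_simp
      linear_combination ((n.choose (2*r) : ℝ)) * keyR
    rw [hstep]
    have : ((m - i : ℕ) : ℝ) + ((k - m : ℕ) : ℝ) = ((k - i : ℕ) : ℝ) := by
      have : (m - i) + (k - m) = k - i := by omega
      exact_mod_cast this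
    linear_combination fE n r k m * this
  · rw [fE_zero n r k m hmk, fE_zero n r k (m+1) (by omega)]
    ring

/-- Row identity: the row of `fE (|·∪J|)` at `I` is `C(k-|I|, r-|I|)⁻¹` times the sum of
the rows at `r`-sets containing `I`. -/
lemma row_span (n r k : ℕ) (hrn : 2 * r ≤ n) (hrk : r ≤ k)
    (J : Finset (Fin n)) (hJ : J.card ≤ r) :
    ∀ (d : ℕ) (I : Finset (Fin n)), I.card + d = r →
      ∑ T ∈ (Finset.univ.powersetCard r).filter (fun T => I ⊆ T), fE n r k ((T ∪ J).card)
        = ((k - I.card).choose d : ℝ) * fE n r k ((I ∪ J).card) := by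
  intro d
  induction d with
  | zero =>
    intro I hI
    have hfilter : (Finset.univ.powersetCard r).filter (fun T => I ⊆ T) = {I} := by
      ext T
      simp only [mem_filter, mem_powersetCard_univ, mem_singleton]
      constructor
      · rintro ⟨hc, hs⟩
        exact (Finset.eq_of_subset_of_card_le hs (by omega)).symm
      · rintro rfl; exact ⟨by omega, Finset.Subset.refl _⟩
    rw [hfilter, Finset.sum_singleton, Nat.choose_zero_right]
    simp
  | succ d ih =>
    intro I hI
    set i := I.card with hi
    set m := (I ∪ J).card with hmdef
    have him : i ≤ m := Finset.card_le_card Finset.subset_union_left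
    have hmle : m ≤ i + J.card := (Finset.card_union_le I J).trans (by omega)
    have hm2r : m < 2 * r := by omega
    have hik : i < k := by omega
    set g : Finset (Fin n) → ℝ := fun T => fE n r k ((T ∪ J).card) with hg
    -- double counting
    have key : ∑ x ∈ Iᶜ, ∑ T ∈ (Finset.univ.powersetCard r).filter (fun T => insert x I ⊆ T), g T
        = ((d+1 : ℕ) : ℝ) *
          ∑ T ∈ (Finset.univ.powersetCard r).filter (fun T => I ⊆ T), g T := by
      rw [Finset.mul_sum]
      simp only [Finset.sum_filter]
      rw [Finset.sum_comm]
      refine Finset.sum_congr rfl (fun T hT => ?_)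
      by_cases hIT : I ⊆ T
      · have hcT : T.card = r := (mem_powersetCard_univ).1 hT
        have : ∀ x ∈ Iᶜ, (if insert x I ⊆ T then g T else 0)
            = if x ∈ T \ I then g T else 0 := by
          intro x hx
          have hxI : x ∉ I := Finset.mem_compl.1 hx
          refine if_congr ?_ rfl rfl
          simp [Finset.insert_subset_iff, Finset.mem_sdiff, hxI, hIT]
        rw [Finset.sum_congr rfl this]
        have hsub : T \ I ⊆ Iᶜ := by
          intro x hx
          rw [Finset.mem_compl]
          exact (Finset.mem_sdiff.1 hx).2
        rw [← Finset.sum_filter]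
        have : Iᶜ.filter (fun x => x ∈ T \ I) = T \ I := by
          ext x
          simp only [Finset.mem_filter, Finset.mem_compl, Finset.mem_sdiff]
          tauto
        rw [this, Finset.sum_const]
        have : (T \ I).card = d + 1 := by
          rw [Finset.card_sdiff_of_subset hIT]; omega
        rw [this, if_pos hIT]
        simp [nsmul_eq_mul]
      · simp only [if_neg hIT, mul_zero]
        refine Finset.sum_eq_zero (fun x hx => ?_)
        rw [if_neg]
        intro hins
        exact hIT ((Finset.subset_insert x I).trans hins)
    -- evaluate the LHS of key by the induction hypothesis
    have lhs_eval : ∀ x ∈ Iᶜ,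
        ∑ T ∈ (Finset.univ.powersetCard r).filter (fun T => insert x I ⊆ T), g T
          = ((k - (i+1)).choose d : ℝ) * fE n r k ((insert x (I ∪ J)).card) := by
      intro x hx
      have hxI : x ∉ I := Finset.mem_compl.1 hx
      have hcard : (insert x I).card = i + 1 := Finset.card_insert_of_notMem hxI
      have := ih (insert x I) (by omega)
      rw [hcard] at this
      rw [this, Finset.insert_union]
    rw [Finset.sum_congr rfl lhs_eval] at key
    -- split Iᶜ into J \ I and (I ∪ J)ᶜ
    have hsplit : Iᶜ = (J \ I) ∪ (I ∪ J)ᶜ := by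
      ext x
      simp only [Finset.mem_compl, Finset.mem_union, Finset.mem_sdiff]
      tauto
    have hdisj : Disjoint (J \ I) (I ∪ J)ᶜ := by
      rw [Finset.disjoint_left]
      intro x hx hx'
      exact (Finset.mem_compl.1 hx') (Finset.mem_union_right I (Finset.mem_sdiff.1 hx).1)
    rw [hsplit, Finset.sum_union hdisj] at key
    have e1 : ∀ x ∈ J \ I, ((k - (i+1)).choose d : ℝ) * fE n r k ((insert x (I ∪ J)).card)
        = ((k - (i+1)).choose d : ℝ) * fE n r k m := by
      intro x hx
      rw [Finset.insert_eq_self.2 (Finset.mem_union_right I (Finset.mem_sdiff.1 hx).1)]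
    have e2 : ∀ x ∈ (I ∪ J)ᶜ, ((k - (i+1)).choose d : ℝ) * fE n r k ((insert x (I ∪ J)).card)
        = ((k - (i+1)).choose d : ℝ) * fE n r k (m + 1) := by
      intro x hx
      rw [Finset.card_insert_of_notMem (Finset.mem_compl.1 hx)]
    rw [Finset.sum_congr rfl e1, Finset.sum_congr rfl e2, Finset.sum_const, Finset.sum_const] at key
    have hc1 : (J \ I).card = m - i := by
      have h : J \ I = (I ∪ J) \ I := by
        ext x; simp only [Finset.mem_sdiff, Finset.mem_union]; tauto
      rw [h, Finset.card_sdiff_of_subset Finset.subset_union_left]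
    have hc2 : (I ∪ J)ᶜ.card = n - m := by
      rw [Finset.card_compl, Fintype.card_fin]
    rw [hc1, hc2] at key
    simp only [nsmul_eq_mul] at key
    -- apply the ratio identity
    have ratio := fE_ratio n r k m i hrn hrk him hik.le hm2r
    have key2 : ((d+1:ℕ) : ℝ) *
        ∑ T ∈ (Finset.univ.powersetCard r).filter (fun T => I ⊆ T), g T
        = ((k - (i+1)).choose d : ℝ) * (((k - i : ℕ) : ℝ) * fE n r k m) := by
      rw [← key, ← ratio]; ring
    -- (k-i)·C(k-i-1, d) = (d+1)·C(k-i, d+1)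
    have hnat : (k - i) * (k - (i+1)).choose d = (k - i).choose (d+1) * (d+1) := by
      have h1 : k - i = Nat.succ (k - (i+1)) := by omega
      rw [h1, Nat.add_one_mul_choose_eq]
    have hnatR : ((k - i : ℕ) : ℝ) * ((k - (i+1)).choose d : ℝ)
        = ((k - i).choose (d+1) : ℝ) * ((d+1 : ℕ) : ℝ) := by exact_mod_cast hnat
    have hd1 : ((d+1:ℕ) : ℝ) ≠ 0 := by positivity
    apply mul_left_cancel₀ hd1
    rw [key2]
    calc ((k - (i+1)).choose d : ℝ) * (((k - i : ℕ) : ℝ) * fE n r k m)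
        = (((k - i : ℕ) : ℝ) * ((k - (i+1)).choose d : ℝ)) * fE n r k m := by ring
      _ = (((k - i).choose (d+1) : ℝ) * ((d+1 : ℕ) : ℝ)) * fE n r k m := by rw [hnatR]
      _ = ((d+1:ℕ) : ℝ) * (((k - i).choose (d+1) : ℝ) * fE n r k m) := by ring

/-- For positive integers `n, r, k` with `2r ≤ n` and `r ≤ k`, the
kernel of `E` (as a linear map on the corresponding real coordinate space) has dimension
at least `Σ_{i=0}^{r−1} C(n,i)`. -/
theorem Emat_kernel_dim (n r k : ℕ) (hn : 1 ≤ n) (hr : 1 ≤ r) (hk : 1 ≤ k)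
    (hrn : 2 * r ≤ n) (hrk : r ≤ k) :
    ∑ i ∈ Finset.range r, Nat.choose n i
      ≤ Module.finrank ℝ (LinearMap.ker (Matrix.mulVecLin (Emat n r k))) := by
  classical
  set M : Matrix {S : Finset (Fin n) // S.card ≤ r} {S : Finset (Fin n) // S.card = r} ℝ :=
    fun I T => if I.1 ⊆ T.1 then ((k - I.1.card).choose (r - I.1.card) : ℝ)⁻¹ else 0 with hM
  set B : Matrix {S : Finset (Fin n) // S.card = r} {S : Finset (Fin n) // S.card ≤ r} ℝ :=
    fun T J => fE n r k ((T.1 ∪ J.1).card) with hB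
  have hfact : Emat n r k = M * B := by
    ext I J
    rw [Matrix.mul_apply]
    have hsub := Finset.sum_subtype (p := fun S : Finset (Fin n) => S.card = r)
      (F := inferInstance)
      (Finset.univ.powersetCard r) (fun T => Finset.mem_powersetCard_univ)
      (fun T => (if I.1 ⊆ T then ((k - I.1.card).choose (r - I.1.card) : ℝ)⁻¹ else 0)
        * fE n r k ((T ∪ J.1).card))
    rw [hM, hB]
    simp only
    rw [← hsub]
    have : ∀ T ∈ Finset.univ.powersetCard r,
        (if I.1 ⊆ T then ((k - I.1.card).choose (r - I.1.card) : ℝ)⁻¹ else 0)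
          * fE n r k ((T ∪ J.1).card)
        = if I.1 ⊆ T then ((k - I.1.card).choose (r - I.1.card) : ℝ)⁻¹
            * fE n r k ((T ∪ J.1).card) else 0 := by
      intro T _
      split <;> simp
    rw [Finset.sum_congr rfl this, ← Finset.sum_filter, ← Finset.mul_sum]
    rw [row_span n r k hrn hrk J.1 J.2 (r - I.1.card) I.1 (by omega)]
    have hpos : (0:ℝ) < (((k - I.1.card).choose (r - I.1.card) : ℕ) : ℝ) := by
      exact_mod_cast Nat.choose_pos (by omega)
    rw [← mul_assoc, inv_mul_cancel₀ hpos.ne', one_mul]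
    rfl
  have hrank : (Emat n r k).rank ≤ n.choose r := by
    rw [hfact]
    calc (M * B).rank ≤ M.rank := Matrix.rank_mul_le_left M B
      _ ≤ Fintype.card {S : Finset (Fin n) // S.card = r} := Matrix.rank_le_card_width M
      _ = n.choose r := by rw [Fintype.card_finset_len, Fintype.card_fin]
  have hcard : Fintype.card {S : Finset (Fin n) // S.card ≤ r}
      = ∑ i ∈ Finset.range (r+1), n.choose i := by
    rw [Fintype.card_subtype]
    rw [Finset.card_eq_sum_card_fiberwise (f := fun S : Finset (Fin n) => S.card)
      (t := Finset.range (r+1)) (fun S hS =>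
        Finset.mem_range.2 (Nat.lt_succ_of_le (Finset.mem_filter.1 hS).2))]
    refine Finset.sum_congr rfl fun i hi => ?_
    have hi' : i ≤ r := by
      have := Finset.mem_range.1 hi; omega
    have hfil : (Finset.univ.filter fun S : Finset (Fin n) => S.card ≤ r).filter
        (fun S => S.card = i) = Finset.univ.powersetCard i := by
      ext S
      simp only [Finset.mem_filter, Finset.mem_powersetCard_univ, Finset.mem_univ, true_and]
      constructor
      · rintro ⟨_, h⟩; exact h
      · intro h; exact ⟨by omega, h⟩
    rw [hfil, Finset.card_powersetCard, Finset.card_univ, Fintype.card_fin]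
  have hdim := LinearMap.finrank_range_add_finrank_ker (Matrix.mulVecLin (Emat n r k))
  rw [Module.finrank_fintype_fun_eq_card, hcard] at hdim
  have hrk' : Module.finrank ℝ (LinearMap.range (Matrix.mulVecLin (Emat n r k)))
      ≤ n.choose r := hrank
  rw [Finset.sum_range_succ] at hdim
  omega
end

section
/- Let n, r₁, r₂, i be integers with 0 ≤ i ≤ min(r₁, r₂) and r₁, r₂ ≤ n. Let R be a real matrix with rows indexed by the (r₁−i)-element subsets of [n] and columns indexed by the (r₂−i)-element subsets of [n], such that R(V,W) = 0 whenever V ∩ W ≠ ∅. Define the real matrix R^{(i)}, with rows indexed by the r₁-element subsets and columns indexed by the r₂-element subsets of [n], by R^{(i)}(I,J) = R(I ∖ (I∩J), J ∖ (I∩J)) if |I∩J| = i, and R^{(i)}(I,J) = 0 otherwise. Then ‖R^{(i)}‖ ≤ C(r₁,i)·C(r₂,i)·‖R‖. -/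
open Finset Matrix

/-- The spectral (ℓ² operator) norm of a real matrix. -/
noncomputable def matSpectralNorm {m l : Type*} [Fintype m] [Fintype l] [DecidableEq l]
    (M : Matrix m l ℝ) : ℝ :=
  ‖LinearMap.toContinuousLinearMap (Matrix.toEuclideanLin M)‖

open scoped Classical in
/-- Given a matrix `R` with rows indexed by the `(r₁−i)`-element subsets of `[n]` and
columns indexed by the `(r₂−i)`-element subsets of `[n]`, the matrix `R^{(i)}`, with rows
indexed by the `r₁`-element and columns by the `r₂`-element subsets of `[n]`, is defined
by `R^{(i)}(I,J) = R(I ∖ (I∩J), J ∖ (I∩J))` if `|I∩J| = i`, and `0` otherwise. -/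
noncomputable def extendMat (n r₁ r₂ i : ℕ)
    (R : Matrix {V : Finset (Fin n) // V.card = r₁ - i}
        {W : Finset (Fin n) // W.card = r₂ - i} ℝ) :
    Matrix {I : Finset (Fin n) // I.card = r₁} {J : Finset (Fin n) // J.card = r₂} ℝ :=
  fun I J =>
    if h : (I.1 ∩ J.1).card = i then
      R ⟨I.1 \ (I.1 ∩ J.1), by
          have h1 : (I.1 ∩ J.1) ⊆ I.1 := Finset.inter_subset_left
          have := Finset.card_sdiff_of_subset h1
          have := I.2
          omega⟩
        ⟨J.1 \ (I.1 ∩ J.1), by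
          have h1 : (I.1 ∩ J.1) ⊆ J.1 := Finset.inter_subset_right
          have := Finset.card_sdiff_of_subset h1
          have := J.2
          omega⟩
    else 0

section Aux

lemma euclid_norm_sq {ι : Type*} [Fintype ι] (v : EuclideanSpace ℝ ι) :
    ‖v‖ ^ 2 = ∑ j, v j ^ 2 := by
  rw [EuclideanSpace.norm_eq, Real.sq_sqrt (by positivity)]
  simp [sq_abs]

lemma toEuclideanLin_apply' {m l : Type*} [Fintype m] [Fintype l] [DecidableEq l]
    (M : Matrix m l ℝ) (x : EuclideanSpace ℝ l) (j : m) :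
    Matrix.toEuclideanLin M x j = ∑ a, M j a * x a := rfl

lemma le_spectral_mul {m l : Type*} [Fintype m] [Fintype l] [DecidableEq l]
    (M : Matrix m l ℝ) (x : EuclideanSpace ℝ l) :
    ‖Matrix.toEuclideanLin M x‖ ≤ matSpectralNorm M * ‖x‖ := by
  simpa [matSpectralNorm] using (LinearMap.toContinuousLinearMap (Matrix.toEuclideanLin M)).le_opNorm x

lemma matSpectralNorm_nonneg {m l : Type*} [Fintype m] [Fintype l] [DecidableEq l]
    (M : Matrix m l ℝ) : 0 ≤ matSpectralNorm M := norm_nonneg _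

lemma matSpectralNorm_le_bound {m l : Type*} [Fintype m] [Fintype l] [DecidableEq l]
    (M : Matrix m l ℝ) (c : ℝ) (hc : 0 ≤ c)
    (h : ∀ x : EuclideanSpace ℝ l, ‖Matrix.toEuclideanLin M x‖ ≤ c * ‖x‖) :
    matSpectralNorm M ≤ c :=
  ContinuousLinearMap.opNorm_le_bound _ hc (fun x => by simpa using h x)

lemma matSpectralNorm_mul_le {m l k : Type*} [Fintype m] [Fintype l] [Fintype k]
    [DecidableEq l] [DecidableEq k] (A : Matrix m l ℝ) (B : Matrix l k ℝ) :
    matSpectralNorm (A * B) ≤ matSpectralNorm A * matSpectralNorm B := by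
  apply matSpectralNorm_le_bound _ _
    (mul_nonneg (matSpectralNorm_nonneg _) (matSpectralNorm_nonneg _))
  intro x
  have hcomp : Matrix.toEuclideanLin (A * B) x
      = Matrix.toEuclideanLin A (Matrix.toEuclideanLin B x) := by
    simp [Matrix.toEuclideanLin_apply, Matrix.mulVec_mulVec]
  rw [hcomp, mul_assoc]
  calc ‖Matrix.toEuclideanLin A (Matrix.toEuclideanLin B x)‖
      ≤ matSpectralNorm A * ‖Matrix.toEuclideanLin B x‖ := le_spectral_mul _ _
    _ ≤ matSpectralNorm A * (matSpectralNorm B * ‖x‖) := by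
        exact mul_le_mul_of_nonneg_left (le_spectral_mul _ _) (matSpectralNorm_nonneg _)

end Aux

section Glue

open scoped Classical

variable {n k i : ℕ}

noncomputable def glueMat (n k i : ℕ) :
    Matrix ({S : Finset (Fin n) // S.card = i} × {V : Finset (Fin n) // V.card = k - i})
      {I : Finset (Fin n) // I.card = k} ℝ :=
  fun p I => if p.1.1 ∪ p.2.1 = I.1 ∧ Disjoint p.1.1 p.2.1 then 1 else 0

lemma card_filter_pairs_le (J : Finset (Fin n)) (hJ : J.card = k) :
    ((Finset.univ : Finset ({S : Finset (Fin n) // S.card = i} ×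
        {V : Finset (Fin n) // V.card = k - i})).filter
      (fun p => p.1.1 ∪ p.2.1 = J ∧ Disjoint p.1.1 p.2.1)).card ≤ Nat.choose k i := by
  have h := Finset.card_le_card_of_injOn (fun p => p.1.1) ?_ ?_
    (s := (Finset.univ : Finset ({S : Finset (Fin n) // S.card = i} ×
        {V : Finset (Fin n) // V.card = k - i})).filter
      (fun p => p.1.1 ∪ p.2.1 = J ∧ Disjoint p.1.1 p.2.1))
    (t := J.powersetCard i)
  · rwa [Finset.card_powersetCard, hJ] at h
  · intro p hp
    simp only [Finset.coe_filter, Finset.mem_coe, Finset.mem_filter, Finset.mem_univ, true_and, Set.mem_setOf_eq] at hp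
    simp only [Finset.mem_coe, Finset.mem_powersetCard]
    exact ⟨hp.1 ▸ Finset.subset_union_left, p.1.2⟩
  · intro p hp q hq hpq
    simp only [Finset.mem_filter, Finset.mem_univ, true_and,
      Set.mem_setOf_eq, Finset.coe_filter] at hp hq hpq
    have h2 : p.2.1 = q.2.1 := by
      have e1 : p.2.1 = J \ p.1.1 := by
        rw [← hp.1, Finset.union_sdiff_cancel_left hp.2]
      have e2 : q.2.1 = J \ q.1.1 := by
        rw [← hq.1, Finset.union_sdiff_cancel_left hq.2]
      rw [e1, e2, hpq]
    exact Prod.ext (Subtype.ext hpq) (Subtype.ext h2)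

lemma glue_apply (hik : i ≤ k) (y : EuclideanSpace ℝ {I : Finset (Fin n) // I.card = k})
    (p : {S : Finset (Fin n) // S.card = i} × {V : Finset (Fin n) // V.card = k - i}) :
    Matrix.toEuclideanLin (glueMat n k i) y p =
      if h : Disjoint p.1.1 p.2.1 then
        y ⟨p.1.1 ∪ p.2.1, by rw [Finset.card_union_of_disjoint h, p.1.2, p.2.2]; omega⟩
      else 0 := by
  rw [toEuclideanLin_apply']
  split
  · next h =>
    rw [Finset.sum_eq_single (⟨p.1.1 ∪ p.2.1, by
        rw [Finset.card_union_of_disjoint h, p.1.2, p.2.2]; omega⟩ :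
        {I : Finset (Fin n) // I.card = k})]
    · simp [glueMat, h]
    · intro b _ hb
      have : ¬(p.1.1 ∪ p.2.1 = b.1 ∧ Disjoint p.1.1 p.2.1) := by
        rintro ⟨h1, -⟩
        exact hb (Subtype.ext h1.symm)
      simp [glueMat, this]
    · intro hmem; exact absurd (Finset.mem_univ _) hmem
  · next h =>
    apply Finset.sum_eq_zero
    intro b _
    have : ¬(p.1.1 ∪ p.2.1 = b.1 ∧ Disjoint p.1.1 p.2.1) := fun hc => h hc.2
    simp [glueMat, this]

lemma glue_norm_le (hik : i ≤ k) :
    matSpectralNorm (glueMat n k i) ≤ (Nat.choose k i : ℝ) := by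
  apply matSpectralNorm_le_bound _ _ (by positivity)
  intro y
  have hc1 : (1 : ℝ) ≤ (Nat.choose k i : ℝ) := by
    exact_mod_cast Nat.one_le_iff_ne_zero.mpr (Nat.choose_pos hik).ne'
  have key : ‖Matrix.toEuclideanLin (glueMat n k i) y‖ ^ 2
      ≤ (Nat.choose k i : ℝ) * ‖y‖ ^ 2 := by
    rw [euclid_norm_sq, euclid_norm_sq]
    have step1 : ∑ p, (Matrix.toEuclideanLin (glueMat n k i) y p) ^ 2
        = ∑ p : {S : Finset (Fin n) // S.card = i} × {V : Finset (Fin n) // V.card = k - i},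
          ∑ J : {I : Finset (Fin n) // I.card = k},
          (if p.1.1 ∪ p.2.1 = J.1 ∧ Disjoint p.1.1 p.2.1 then (y J) ^ 2 else 0) := by
      apply Finset.sum_congr rfl
      intro p _
      rw [glue_apply hik]
      split
      · next h =>
        rw [Finset.sum_eq_single (⟨p.1.1 ∪ p.2.1, by
            rw [Finset.card_union_of_disjoint h, p.1.2, p.2.2]; omega⟩ :
            {I : Finset (Fin n) // I.card = k})]
        · simp [h]
        · intro b _ hb
          have : ¬(p.1.1 ∪ p.2.1 = b.1 ∧ Disjoint p.1.1 p.2.1) := by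
            rintro ⟨h1, -⟩; exact hb (Subtype.ext h1.symm)
          simp [this]
        · intro hmem; exact absurd (Finset.mem_univ _) hmem
      · next h =>
        have h0 : (0:ℝ) ^ 2 = 0 := by norm_num
        rw [h0]
        symm; apply Finset.sum_eq_zero
        intro b _
        have : ¬(p.1.1 ∪ p.2.1 = b.1 ∧ Disjoint p.1.1 p.2.1) := fun hc => h hc.2
        simp [this]
    rw [step1, Finset.sum_comm, Finset.mul_sum]
    apply Finset.sum_le_sum
    intro J _
    rw [← Finset.sum_filter]
    simp only [Finset.sum_const, nsmul_eq_mul]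
    apply mul_le_mul_of_nonneg_right _ (sq_nonneg _)
    exact_mod_cast card_filter_pairs_le J.1 J.2
  have h2 : ‖Matrix.toEuclideanLin (glueMat n k i) y‖ ^ 2
      ≤ ((Nat.choose k i : ℝ) * ‖y‖) ^ 2 := by nlinarith [norm_nonneg y, sq_nonneg ‖y‖]
  have h3 := Real.sqrt_le_sqrt h2
  rwa [Real.sqrt_sq (norm_nonneg _), Real.sqrt_sq (by positivity)] at h3

lemma glueT_norm_le (hik : i ≤ k) :
    matSpectralNorm (glueMat n k i)ᵀ ≤ (Nat.choose k i : ℝ) := by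
  apply matSpectralNorm_le_bound _ _ (by positivity)
  intro z
  have hc1 : (1 : ℝ) ≤ (Nat.choose k i : ℝ) := by
    exact_mod_cast Nat.one_le_iff_ne_zero.mpr (Nat.choose_pos hik).ne'
  have key : ‖Matrix.toEuclideanLin (glueMat n k i)ᵀ z‖ ^ 2
      ≤ (Nat.choose k i : ℝ) * ‖z‖ ^ 2 := by
    rw [euclid_norm_sq, euclid_norm_sq]
    have happ : ∀ I : {I : Finset (Fin n) // I.card = k},
        Matrix.toEuclideanLin (glueMat n k i)ᵀ z I
          = ∑ p ∈ Finset.univ.filter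
              (fun p : {S : Finset (Fin n) // S.card = i} ×
                  {V : Finset (Fin n) // V.card = k - i} =>
                p.1.1 ∪ p.2.1 = I.1 ∧ Disjoint p.1.1 p.2.1), z p := by
      intro I
      rw [toEuclideanLin_apply', Finset.sum_filter]
      apply Finset.sum_congr rfl
      intro p _
      simp [glueMat, Matrix.transpose_apply, ite_mul]
    calc ∑ I, (Matrix.toEuclideanLin (glueMat n k i)ᵀ z I) ^ 2
        = ∑ I : {I : Finset (Fin n) // I.card = k},
            (∑ p ∈ Finset.univ.filter
              (fun p : {S : Finset (Fin n) // S.card = i} ×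
                  {V : Finset (Fin n) // V.card = k - i} =>
                p.1.1 ∪ p.2.1 = I.1 ∧ Disjoint p.1.1 p.2.1), z p) ^ 2 := by
          exact Finset.sum_congr rfl (fun I _ => by rw [happ])
      _ ≤ ∑ I : {I : Finset (Fin n) // I.card = k},
            (Nat.choose k i : ℝ) * ∑ p ∈ Finset.univ.filter
              (fun p : {S : Finset (Fin n) // S.card = i} ×
                  {V : Finset (Fin n) // V.card = k - i} =>
                p.1.1 ∪ p.2.1 = I.1 ∧ Disjoint p.1.1 p.2.1), (z p) ^ 2 := by
          apply Finset.sum_le_sum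
          intro I _
          calc (∑ p ∈ _, z p) ^ 2
              ≤ (_ : Finset _).card * ∑ p ∈ _, (z p) ^ 2 :=
                sq_sum_le_card_mul_sum_sq
            _ ≤ _ := by
                apply mul_le_mul_of_nonneg_right
                · exact_mod_cast card_filter_pairs_le I.1 I.2
                · exact Finset.sum_nonneg (fun p _ => sq_nonneg _)
      _ = (Nat.choose k i : ℝ) * ∑ I : {I : Finset (Fin n) // I.card = k},
            ∑ p ∈ Finset.univ.filter
              (fun p : {S : Finset (Fin n) // S.card = i} ×
                  {V : Finset (Fin n) // V.card = k - i} =>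
                p.1.1 ∪ p.2.1 = I.1 ∧ Disjoint p.1.1 p.2.1), (z p) ^ 2 := by
          rw [Finset.mul_sum]
      _ ≤ (Nat.choose k i : ℝ) * ∑ p, (z p) ^ 2 := by
          apply mul_le_mul_of_nonneg_left _ (by positivity)
          have swap : ∑ I : {I : Finset (Fin n) // I.card = k},
              ∑ p ∈ Finset.univ.filter
                (fun p : {S : Finset (Fin n) // S.card = i} ×
                    {V : Finset (Fin n) // V.card = k - i} =>
                  p.1.1 ∪ p.2.1 = I.1 ∧ Disjoint p.1.1 p.2.1), (z p) ^ 2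
              = ∑ p : {S : Finset (Fin n) // S.card = i} ×
                    {V : Finset (Fin n) // V.card = k - i},
                ∑ I ∈ Finset.univ.filter
                  (fun I : {I : Finset (Fin n) // I.card = k} =>
                    p.1.1 ∪ p.2.1 = I.1 ∧ Disjoint p.1.1 p.2.1), (z p) ^ 2 := by
            simp_rw [Finset.sum_filter]
            exact Finset.sum_comm
          rw [swap]
          apply Finset.sum_le_sum
          intro p _
          have hcard : (Finset.univ.filter
              (fun I : {I : Finset (Fin n) // I.card = k} =>
                p.1.1 ∪ p.2.1 = I.1 ∧ Disjoint p.1.1 p.2.1)).card ≤ 1 := by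
            apply Finset.card_le_one.mpr
            intro a ha b hb
            simp only [Finset.mem_filter] at ha hb
            exact Subtype.ext (ha.2.1.symm.trans hb.2.1)
          rw [Finset.sum_const, nsmul_eq_mul]
          calc ((Finset.univ.filter _).card : ℝ) * (z p) ^ 2
              ≤ 1 * (z p) ^ 2 := by
                apply mul_le_mul_of_nonneg_right _ (sq_nonneg _)
                convert (Nat.cast_le (α := ℝ)).mpr hcard using 2 <;> simp
            _ = (z p) ^ 2 := one_mul _
  have h2 : ‖Matrix.toEuclideanLin (glueMat n k i)ᵀ z‖ ^ 2
      ≤ ((Nat.choose k i : ℝ) * ‖z‖) ^ 2 := by nlinarith [norm_nonneg z, sq_nonneg ‖z‖]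
  have h3 := Real.sqrt_le_sqrt h2
  rwa [Real.sqrt_sq (norm_nonneg _), Real.sqrt_sq (by positivity)] at h3

end Glue
section Block

open scoped Classical

variable {n a b i : ℕ}

noncomputable def blockMat (n a b i : ℕ)
    (R : Matrix {V : Finset (Fin n) // V.card = a} {W : Finset (Fin n) // W.card = b} ℝ) :
    Matrix ({S : Finset (Fin n) // S.card = i} × {V : Finset (Fin n) // V.card = a})
      ({S : Finset (Fin n) // S.card = i} × {W : Finset (Fin n) // W.card = b}) ℝ :=
  fun p q => if p.1 = q.1 then R p.2 q.2 else 0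

lemma block_apply
    (R : Matrix {V : Finset (Fin n) // V.card = a} {W : Finset (Fin n) // W.card = b} ℝ)
    (x : EuclideanSpace ℝ ({S : Finset (Fin n) // S.card = i} ×
      {W : Finset (Fin n) // W.card = b}))
    (p : {S : Finset (Fin n) // S.card = i} × {V : Finset (Fin n) // V.card = a}) :
    Matrix.toEuclideanLin (blockMat n a b i R) x p
      = ∑ W, R p.2 W * x (p.1, W) := by
  rw [toEuclideanLin_apply', Fintype.sum_prod_type, Finset.sum_comm]
  simp [blockMat, ite_mul, Finset.sum_ite_eq]

lemma block_norm_le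
    (R : Matrix {V : Finset (Fin n) // V.card = a} {W : Finset (Fin n) // W.card = b} ℝ) :
    matSpectralNorm (blockMat n a b i R) ≤ matSpectralNorm R := by
  apply matSpectralNorm_le_bound _ _ (matSpectralNorm_nonneg R)
  intro x
  let xS : {S : Finset (Fin n) // S.card = i} →
      EuclideanSpace ℝ {W : Finset (Fin n) // W.card = b} := fun S => WithLp.toLp 2 (fun W => x (S, W))
  have key : ‖Matrix.toEuclideanLin (blockMat n a b i R) x‖ ^ 2
      ≤ (matSpectralNorm R * ‖x‖) ^ 2 := by
    rw [euclid_norm_sq]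
    calc ∑ p, (Matrix.toEuclideanLin (blockMat n a b i R) x p) ^ 2
        = ∑ S : {S : Finset (Fin n) // S.card = i},
            ∑ V : {V : Finset (Fin n) // V.card = a},
            (Matrix.toEuclideanLin R (xS S) V) ^ 2 := by
          rw [Fintype.sum_prod_type]
          apply Finset.sum_congr rfl; intro S _
          apply Finset.sum_congr rfl; intro V _
          rw [block_apply, toEuclideanLin_apply']
      _ = ∑ S : {S : Finset (Fin n) // S.card = i},
            ‖Matrix.toEuclideanLin R (xS S)‖ ^ 2 := by
          apply Finset.sum_congr rfl; intro S _
          rw [euclid_norm_sq]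
      _ ≤ ∑ S : {S : Finset (Fin n) // S.card = i},
            (matSpectralNorm R * ‖xS S‖) ^ 2 := by
          apply Finset.sum_le_sum; intro S _
          apply pow_le_pow_left₀ (norm_nonneg _) (le_spectral_mul _ _)
      _ = (matSpectralNorm R) ^ 2 * ∑ S : {S : Finset (Fin n) // S.card = i},
            ‖xS S‖ ^ 2 := by
          rw [Finset.mul_sum]
          apply Finset.sum_congr rfl; intro S _
          ring
      _ = (matSpectralNorm R) ^ 2 * ‖x‖ ^ 2 := by
          congr 1
          rw [euclid_norm_sq, Fintype.sum_prod_type]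
          apply Finset.sum_congr rfl; intro S _
          rw [euclid_norm_sq]
      _ = (matSpectralNorm R * ‖x‖) ^ 2 := by ring
  have h3 := Real.sqrt_le_sqrt key
  rwa [Real.sqrt_sq (norm_nonneg _),
    Real.sqrt_sq (mul_nonneg (matSpectralNorm_nonneg _) (norm_nonneg _))] at h3

end Block
section Factor

open scoped Classical

variable {n r₁ r₂ i : ℕ}

lemma sdiff_inter_sdiff_eq (I J S : Finset (Fin n)) :
    (I \ S) ∩ (J \ S) = (I ∩ J) \ S := by
  ext a
  simp only [Finset.mem_inter, Finset.mem_sdiff]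
  tauto

lemma extend_eq (hi₁ : i ≤ r₁) (hi₂ : i ≤ r₂)
    (R : Matrix {V : Finset (Fin n) // V.card = r₁ - i}
        {W : Finset (Fin n) // W.card = r₂ - i} ℝ)
    (hR : ∀ V W, V.1 ∩ W.1 ≠ ∅ → R V W = 0) :
    extendMat n r₁ r₂ i R
      = (glueMat n r₁ i)ᵀ * (blockMat n (r₁ - i) (r₂ - i) i R * glueMat n r₂ i) := by
  ext I J
  have inner : ∀ p : {S : Finset (Fin n) // S.card = i} ×
      {V : Finset (Fin n) // V.card = r₁ - i},
      (blockMat n (r₁ - i) (r₂ - i) i R * glueMat n r₂ i) p J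
        = if hs : p.1.1 ⊆ J.1 then
            R p.2 ⟨J.1 \ p.1.1, by rw [Finset.card_sdiff_of_subset hs, J.2, p.1.2]⟩
          else 0 := by
    intro p
    rw [Matrix.mul_apply, Fintype.sum_prod_type, Finset.sum_comm]
    have collapse : ∀ W : {W : Finset (Fin n) // W.card = r₂ - i},
        (∑ S' : {S : Finset (Fin n) // S.card = i},
          blockMat n (r₁ - i) (r₂ - i) i R p (S', W) * glueMat n r₂ i (S', W) J)
          = R p.2 W * glueMat n r₂ i (p.1, W) J := by
      intro W
      rw [Finset.sum_eq_single p.1]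
      · simp [blockMat]
      · intro b _ hb
        simp [blockMat, Ne.symm hb]
      · intro hmem; exact absurd (Finset.mem_univ _) hmem
    rw [Finset.sum_congr rfl (fun W _ => collapse W)]
    split
    · next hs =>
      rw [Finset.sum_eq_single (⟨J.1 \ p.1.1, by
          rw [Finset.card_sdiff_of_subset hs, J.2, p.1.2]⟩ :
          {W : Finset (Fin n) // W.card = r₂ - i})]
      · have hcond : p.1.1 ∪ (J.1 \ p.1.1) = J.1 ∧ Disjoint p.1.1 (J.1 \ p.1.1) :=
          ⟨Finset.union_sdiff_of_subset hs, Finset.disjoint_sdiff⟩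
        simp [glueMat, hcond]
      · intro b _ hb
        have : ¬(p.1.1 ∪ b.1 = J.1 ∧ Disjoint p.1.1 b.1) := by
          rintro ⟨h1, h2⟩
          apply hb
          apply Subtype.ext
          rw [← Finset.union_sdiff_cancel_left h2, h1]
        simp [glueMat, this]
      · intro hmem; exact absurd (Finset.mem_univ _) hmem
    · next hs =>
      apply Finset.sum_eq_zero
      intro b _
      have : ¬(p.1.1 ∪ b.1 = J.1 ∧ Disjoint p.1.1 b.1) := by
        rintro ⟨h1, -⟩
        exact hs (h1 ▸ Finset.subset_union_left)
      simp [glueMat, this]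
  rw [Matrix.mul_apply, Finset.sum_congr rfl (fun p _ => by rw [inner p]),
    Fintype.sum_prod_type]
  have collapse2 : ∀ S : {S : Finset (Fin n) // S.card = i},
      (∑ V : {V : Finset (Fin n) // V.card = r₁ - i},
        (glueMat n r₁ i)ᵀ I (S, V) *
          (if hs : S.1 ⊆ J.1 then
            R V ⟨J.1 \ S.1, by rw [Finset.card_sdiff_of_subset hs, J.2, S.2]⟩
          else 0))
      = if hs : S.1 ⊆ I.1 then
          (if hs' : S.1 ⊆ J.1 then
            R ⟨I.1 \ S.1, by rw [Finset.card_sdiff_of_subset hs, I.2, S.2]⟩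
              ⟨J.1 \ S.1, by rw [Finset.card_sdiff_of_subset hs', J.2, S.2]⟩
          else 0)
        else 0 := by
    intro S
    by_cases hsJ : S.1 ⊆ J.1
    · simp only [dif_pos hsJ]
      by_cases hsI : S.1 ⊆ I.1
      · simp only [dif_pos hsI]
        rw [Finset.sum_eq_single (⟨I.1 \ S.1, by
            rw [Finset.card_sdiff_of_subset hsI, I.2, S.2]⟩ :
            {V : Finset (Fin n) // V.card = r₁ - i})]
        · have hcond : S.1 ∪ (I.1 \ S.1) = I.1 ∧ Disjoint S.1 (I.1 \ S.1) :=
            ⟨Finset.union_sdiff_of_subset hsI, Finset.disjoint_sdiff⟩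
          simp [glueMat, Matrix.transpose_apply, hcond]
        · intro b _ hb
          have : ¬(S.1 ∪ b.1 = I.1 ∧ Disjoint S.1 b.1) := by
            rintro ⟨h1, h2⟩
            apply hb
            apply Subtype.ext
            rw [← Finset.union_sdiff_cancel_left h2, h1]
          simp [glueMat, Matrix.transpose_apply, this]
        · intro hmem; exact absurd (Finset.mem_univ _) hmem
      · simp only [dif_neg hsI]
        apply Finset.sum_eq_zero
        intro b _
        have : ¬(S.1 ∪ b.1 = I.1 ∧ Disjoint S.1 b.1) := by
          rintro ⟨h1, -⟩
          exact hsI (h1 ▸ Finset.subset_union_left)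
        simp [glueMat, Matrix.transpose_apply, this]
    · simp only [dif_neg hsJ, mul_zero, Finset.sum_const_zero]
      split <;> rfl
  rw [Finset.sum_congr rfl (fun S _ => collapse2 S)]
  by_cases hc : (I.1 ∩ J.1).card = i
  · rw [Finset.sum_eq_single (⟨I.1 ∩ J.1, hc⟩ : {S : Finset (Fin n) // S.card = i})]
    · rw [dif_pos (show (⟨I.1 ∩ J.1, hc⟩ :
          {S : Finset (Fin n) // S.card = i}).1 ⊆ I.1 from Finset.inter_subset_left),
        dif_pos (show (⟨I.1 ∩ J.1, hc⟩ :
          {S : Finset (Fin n) // S.card = i}).1 ⊆ J.1 from Finset.inter_subset_right)]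
      simp only [extendMat, dif_pos hc]
    · intro S _ hS
      by_cases hsI : S.1 ⊆ I.1
      · by_cases hsJ : S.1 ⊆ J.1
        · exfalso
          apply hS
          apply Subtype.ext
          apply Finset.eq_of_subset_of_card_le (Finset.subset_inter hsI hsJ)
          rw [hc, S.2]
        · rw [dif_pos hsI, dif_neg hsJ]
      · rw [dif_neg hsI]
    · intro hmem; exact absurd (Finset.mem_univ _) hmem
  · simp only [extendMat, dif_neg hc]
    symm
    apply Finset.sum_eq_zero
    intro S _
    by_cases hsI : S.1 ⊆ I.1
    · by_cases hsJ : S.1 ⊆ J.1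
      · rw [dif_pos hsI, dif_pos hsJ]
        apply hR
        have hsub : S.1 ⊆ I.1 ∩ J.1 := Finset.subset_inter hsI hsJ
        have hlt : i < (I.1 ∩ J.1).card := by
          have := Finset.card_le_card hsub
          rw [S.2] at this
          omega
        show (I.1 \ S.1) ∩ (J.1 \ S.1) ≠ ∅
        rw [sdiff_inter_sdiff_eq, ← Finset.nonempty_iff_ne_empty,
          ← Finset.card_pos, Finset.card_sdiff_of_subset hsub, S.2]
        omega
      · rw [dif_pos hsI, dif_neg hsJ]
    · rw [dif_neg hsI]

end Factor
/-- Let `0 ≤ i ≤ min(r₁, r₂)` and `r₁, r₂ ≤ n`, and let `R` be a real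
matrix indexed by the `(r₁−i)`- and `(r₂−i)`-element subsets of `[n]` with `R(V,W) = 0`
whenever `V ∩ W ≠ ∅`. Then `‖R^{(i)}‖ ≤ C(r₁,i)·C(r₂,i)·‖R‖`. -/
theorem extendMat_norm_bound (n r₁ r₂ i : ℕ) (hi₁ : i ≤ r₁) (hi₂ : i ≤ r₂)
    (h₁ : r₁ ≤ n) (h₂ : r₂ ≤ n)
    (R : Matrix {V : Finset (Fin n) // V.card = r₁ - i}
        {W : Finset (Fin n) // W.card = r₂ - i} ℝ)
    (hR : ∀ V W, V.1 ∩ W.1 ≠ ∅ → R V W = 0) :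
    matSpectralNorm (extendMat n r₁ r₂ i R)
      ≤ (Nat.choose r₁ i : ℝ) * (Nat.choose r₂ i : ℝ) * matSpectralNorm R := by
  rw [extend_eq hi₁ hi₂ R hR]
  have hA := glueT_norm_le (n := n) (k := r₁) (i := i) hi₁
  have hB := glue_norm_le (n := n) (k := r₂) (i := i) hi₂
  have hD := block_norm_le (n := n) (a := r₁ - i) (b := r₂ - i) (i := i) R
  calc matSpectralNorm ((glueMat n r₁ i)ᵀ * (blockMat n (r₁ - i) (r₂ - i) i R * glueMat n r₂ i))
      ≤ matSpectralNorm (glueMat n r₁ i)ᵀ *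
          matSpectralNorm (blockMat n (r₁ - i) (r₂ - i) i R * glueMat n r₂ i) :=
        matSpectralNorm_mul_le _ _
    _ ≤ matSpectralNorm (glueMat n r₁ i)ᵀ *
          (matSpectralNorm (blockMat n (r₁ - i) (r₂ - i) i R) * matSpectralNorm (glueMat n r₂ i)) :=
        mul_le_mul_of_nonneg_left (matSpectralNorm_mul_le _ _) (matSpectralNorm_nonneg _)
    _ ≤ (Nat.choose r₁ i : ℝ) * (matSpectralNorm R * (Nat.choose r₂ i : ℝ)) := by
        apply mul_le_mul hA _ _ (by positivity)
        · exact mul_le_mul hD hB (matSpectralNorm_nonneg _) (matSpectralNorm_nonneg _)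
        · exact mul_nonneg (matSpectralNorm_nonneg _) (matSpectralNorm_nonneg _)
    _ = (Nat.choose r₁ i : ℝ) * (Nat.choose r₂ i : ℝ) * matSpectralNorm R := by ring
end

section
/- For every ε ∈ (0,1) and every nonnegative integer x, if n > x²·(2e − e·ln ε)·(2e + 2 − e·ln ε), then for G ← G(n,1/2), the probability that |N_x(G) − 2^{−C(x,2)}·C(n,x)| > e·(2 − ln ε)·(x²/x!)·n^{x−1} is less than ε. -/
open Finset Real

lemma twoPoint (l a b c : ℝ) (hab : |a - b| ≤ c) :
    Real.exp (l * a) + Real.exp (l * b)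
      ≤ 2 * Real.exp (l * ((a + b) / 2) + l ^ 2 * c ^ 2 / 8) := by
  have key : Real.exp (l * a) + Real.exp (l * b)
      = 2 * Real.exp (l * ((a + b) / 2)) * Real.cosh (l * ((a - b) / 2)) := by
    rw [Real.cosh_eq]
    have e1 : l * a = l * ((a + b) / 2) + l * ((a - b) / 2) := by ring
    have e2 : l * b = l * ((a + b) / 2) + -(l * ((a - b) / 2)) := by ring
    rw [e1, e2, Real.exp_add, Real.exp_add]
    ring
  rw [key]
  have h1 : Real.cosh (l * ((a - b) / 2)) ≤ Real.exp ((l * ((a - b) / 2)) ^ 2 / 2) :=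
    Real.cosh_le_exp_half_sq _
  have h2 : (l * ((a - b) / 2)) ^ 2 / 2 ≤ l ^ 2 * c ^ 2 / 8 := by
    have : (a - b) ^ 2 ≤ c ^ 2 := by
      have := abs_nonneg (a - b)
      nlinarith [sq_abs (a - b)]
    nlinarith [sq_nonneg l, sq_nonneg (a-b)]
  calc 2 * Real.exp (l * ((a + b) / 2)) * Real.cosh (l * ((a - b) / 2))
      ≤ 2 * Real.exp (l * ((a + b) / 2)) * Real.exp (l ^ 2 * c ^ 2 / 8) := by
        have := (h1.trans (Real.exp_le_exp.2 h2))
        have hpos : (0:ℝ) < 2 * Real.exp (l * ((a + b) / 2)) := by positivity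
        nlinarith [Real.cosh_pos (l * ((a - b) / 2))]
    _ = 2 * Real.exp (l * ((a + b) / 2) + l ^ 2 * c ^ 2 / 8) := by
        rw [Real.exp_add]; ring

/-- MGF bound for Lipschitz functions on the Boolean cube. -/
lemma cube_mgf (m : ℕ) (l c : ℝ) (f : (Fin m → Bool) → ℝ)
    (hf : ∀ z i b, |f z - f (Function.update z i b)| ≤ c) :
    ∑ z : Fin m → Bool, Real.exp (l * f z)
      ≤ 2 ^ m * Real.exp (l * ((∑ z : Fin m → Bool, f z) / 2 ^ m)
          + m * (l ^ 2 * c ^ 2 / 8)) := by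
  induction m with
  | zero =>
      simp [Fintype.sum_subsingleton _ (fun _ : Fin 0 => false)]
  | succ m ih =>
      -- reindex by Fin.cons
      have hsum : ∀ (g : (Fin (m+1) → Bool) → ℝ),
          ∑ z : Fin (m+1) → Bool, g z
            = ∑ y : Fin m → Bool, (g (Fin.cons false y) + g (Fin.cons true y)) := by
        intro g
        rw [← Equiv.sum_comp (Fin.consEquiv fun _ : Fin (m+1) => Bool) g,
          Fintype.sum_prod_type_right]
        refine Finset.sum_congr rfl fun y _ => ?_
        simp [Fin.consEquiv, add_comm]
      set g : (Fin m → Bool) → ℝ := fun y => (f (Fin.cons false y) + f (Fin.cons true y)) / 2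
        with hg
      have hgl : ∀ z i b, |g z - g (Function.update z i b)| ≤ c := by
        intro y i b
        have h0 := hf (Fin.cons false y) i.succ b
        have h1 := hf (Fin.cons true y) i.succ b
        rw [← Fin.cons_update] at h0 h1
        have : g y - g (Function.update y i b)
            = ((f (Fin.cons false y) - f (Fin.cons false (Function.update y i b)))
              + (f (Fin.cons true y) - f (Fin.cons true (Function.update y i b)))) / 2 := by
          rw [hg]; ring
        rw [this]
        have hc : (0:ℝ) ≤ c := le_trans (abs_nonneg _) (hf (Fin.cons false y) i.succ b)
        calc |_| ≤ (|f (Fin.cons false y) - f (Fin.cons false (Function.update y i b))|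
              + |f (Fin.cons true y) - f (Fin.cons true (Function.update y i b))|) / 2 := by
                rw [abs_div]
                simp only [abs_two]
                gcongr
                exact abs_add_le _ _
          _ ≤ c := by
                have := h0.trans_eq rfl
                linarith
      have key : ∀ y : Fin m → Bool,
          Real.exp (l * f (Fin.cons false y)) + Real.exp (l * f (Fin.cons true y))
            ≤ 2 * Real.exp (l * g y + l ^ 2 * c ^ 2 / 8) := by
        intro y
        have hd : |f (Fin.cons false y) - f (Fin.cons true y)| ≤ c := by
          have := hf (Fin.cons false y) 0 true
          rwa [Fin.update_cons_zero] at this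
        have := twoPoint l (f (Fin.cons false y)) (f (Fin.cons true y)) c hd
        simpa [hg] using this
      calc ∑ z : Fin (m+1) → Bool, Real.exp (l * f z)
          = ∑ y : Fin m → Bool,
              (Real.exp (l * f (Fin.cons false y)) + Real.exp (l * f (Fin.cons true y))) :=
            hsum _
        _ ≤ ∑ y : Fin m → Bool, 2 * Real.exp (l * g y + l ^ 2 * c ^ 2 / 8) :=
            Finset.sum_le_sum fun y _ => key y
        _ = 2 * Real.exp (l ^ 2 * c ^ 2 / 8) * ∑ y : Fin m → Bool, Real.exp (l * g y) := by
            rw [Finset.mul_sum]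
            congr 1 with y
            rw [Real.exp_add]; ring
        _ ≤ 2 * Real.exp (l ^ 2 * c ^ 2 / 8)
              * (2 ^ m * Real.exp (l * ((∑ y : Fin m → Bool, g y) / 2 ^ m)
                  + m * (l ^ 2 * c ^ 2 / 8))) :=
            mul_le_mul_of_nonneg_left (ih g hgl) (by positivity)
        _ = 2 ^ (m+1) * Real.exp (l * ((∑ z : Fin (m+1) → Bool, f z) / 2 ^ (m+1))
              + ((m+1 : ℕ) : ℝ) * (l ^ 2 * c ^ 2 / 8)) := by
            have hmean : (∑ z : Fin (m+1) → Bool, f z) / 2 ^ (m+1)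
                = (∑ y : Fin m → Bool, g y) / 2 ^ m := by
              rw [hsum f]
              have : ∑ y : Fin m → Bool, g y
                  = (∑ y : Fin m → Bool, (f (Fin.cons false y) + f (Fin.cons true y))) / 2 := by
                rw [hg, ← Finset.sum_div]
              rw [this]
              rw [pow_succ]
              ring
            rw [hmean]
            have hcomb : ∀ u v : ℝ,
                2 * Real.exp u * (2 ^ m * Real.exp v) = 2 ^ (m+1) * Real.exp (u + v) := by
              intro u v; rw [Real.exp_add, pow_succ]; ring
            rw [hcomb]
            congr 1
            simp only [hg]
            have hsum2 : ∑ x : Fin m → Bool, (f (Fin.cons false x) + f (Fin.cons true x)) / 2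
                = ∑ x : Fin m → Bool,
                    (f (Fin.cons false x) * (1/2) + f (Fin.cons true x) * (1/2)) :=
              Finset.sum_congr rfl fun _ _ => by ring
            push_cast
            ring_nf

lemma cube_tail_one (m : ℕ) (c t : ℝ) (f : (Fin m → Bool) → ℝ)
    (hm : 0 < m) (hc : 0 < c) (ht : 0 < t)
    (hf : ∀ z i b, |f z - f (Function.update z i b)| ≤ c) :
    ((Finset.univ.filter fun z : Fin m → Bool =>
        (∑ w : Fin m → Bool, f w) / 2 ^ m + t < f z).card : ℝ)
      ≤ 2 ^ m * Real.exp (-(2 * t ^ 2 / (m * c ^ 2))) := by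
  classical
  set μ : ℝ := (∑ w : Fin m → Bool, f w) / 2 ^ m with hμ
  set l : ℝ := 4 * t / (m * c ^ 2) with hl
  have hmc : (0:ℝ) < (m:ℝ) * c ^ 2 := by positivity
  have hlpos : 0 < l := by positivity
  set s := Finset.univ.filter fun z : Fin m → Bool => μ + t < f z with hs
  have step1 : (s.card : ℝ) * Real.exp (l * (μ + t)) ≤ ∑ z : Fin m → Bool, Real.exp (l * f z) := by
    have h1 : ∀ z ∈ s, Real.exp (l * (μ + t)) ≤ Real.exp (l * f z) := by
      intro z hz
      rw [hs, Finset.mem_filter] at hz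
      exact Real.exp_le_exp.2 (by nlinarith [hz.2])
    calc (s.card : ℝ) * Real.exp (l * (μ + t))
        ≤ ∑ z ∈ s, Real.exp (l * f z) := by
          have := Finset.card_nsmul_le_sum s (fun z => Real.exp (l * f z)) _ h1
          simpa [nsmul_eq_mul] using this
      _ ≤ ∑ z : Fin m → Bool, Real.exp (l * f z) :=
          Finset.sum_le_sum_of_subset_of_nonneg (Finset.filter_subset _ _)
            (fun _ _ _ => le_of_lt (Real.exp_pos _))
  have step2 := cube_mgf m l c f hf
  have hE : (s.card : ℝ) ≤ 2 ^ m * Real.exp (l * μ + m * (l ^ 2 * c ^ 2 / 8))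
      / Real.exp (l * (μ + t)) := by
    rw [le_div_iff₀ (Real.exp_pos _)]
    exact step1.trans step2
  have hexp : 2 ^ m * Real.exp (l * μ + m * (l ^ 2 * c ^ 2 / 8)) / Real.exp (l * (μ + t))
      = 2 ^ m * Real.exp (-(2 * t ^ 2 / (m * c ^ 2))) := by
    rw [mul_div_assoc, ← Real.exp_sub]
    congr 2
    have hexp2 : l * μ + ↑m * (l ^ 2 * c ^ 2 / 8) - l * (μ + t)
        = ↑m * c ^ 2 * l ^ 2 / 8 - l * t := by ring
    rw [hexp2, hl]
    field_simp
    ring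
  exact hE.trans_eq hexp

lemma cube_tail (m : ℕ) (c t : ℝ) (f : (Fin m → Bool) → ℝ)
    (hm : 0 < m) (hc : 0 < c) (ht : 0 < t)
    (hf : ∀ z i b, |f z - f (Function.update z i b)| ≤ c) :
    ((Finset.univ.filter fun z : Fin m → Bool =>
        t < |f z - (∑ w : Fin m → Bool, f w) / 2 ^ m|).card : ℝ)
      ≤ 2 * 2 ^ m * Real.exp (-(2 * t ^ 2 / (m * c ^ 2))) := by
  classical
  set μ : ℝ := (∑ w : Fin m → Bool, f w) / 2 ^ m with hμ
  set g : (Fin m → Bool) → ℝ := fun z => -(f z) with hgdef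
  have hμ' : (∑ w : Fin m → Bool, g w) / 2 ^ m = -μ := by
    simp [hμ, hgdef, neg_div]
  have hsub : (Finset.univ.filter fun z : Fin m → Bool => t < |f z - μ|)
      ⊆ (Finset.univ.filter fun z : Fin m → Bool => μ + t < f z)
        ∪ (Finset.univ.filter fun z : Fin m → Bool =>
            (∑ w : Fin m → Bool, g w) / 2 ^ m + t < g z) := by
    intro z hz
    rw [Finset.mem_filter] at hz
    rw [Finset.mem_union, Finset.mem_filter, Finset.mem_filter]
    rcases lt_abs.1 hz.2 with h | h
    · exact Or.inl ⟨Finset.mem_univ _, by linarith⟩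
    · refine Or.inr ⟨Finset.mem_univ _, ?_⟩
      rw [hμ']
      simp only [hgdef]
      linarith
  have hA := cube_tail_one m c t f hm hc ht hf
  have hB := cube_tail_one m c t g hm hc ht (by
    intro z i b
    have : -f z + f (Function.update z i b) = -(f z - f (Function.update z i b)) := by ring
    simp only [hgdef]
    rw [sub_eq_add_neg, neg_neg, this, abs_neg]
    exact hf z i b)
  calc ((Finset.univ.filter fun z : Fin m → Bool => t < |f z - μ|).card : ℝ)
      ≤ (((Finset.univ.filter fun z : Fin m → Bool => μ + t < f z)
          ∪ (Finset.univ.filter fun z : Fin m → Bool =>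
              (∑ w : Fin m → Bool, g w) / 2 ^ m + t < g z)).card : ℝ) := by
        exact_mod_cast Nat.cast_le.2 (Finset.card_le_card hsub)
    _ ≤ (((Finset.univ.filter fun z : Fin m → Bool => μ + t < f z).card : ℝ)
          + ((Finset.univ.filter fun z : Fin m → Bool =>
              (∑ w : Fin m → Bool, g w) / 2 ^ m + t < g z).card : ℝ)) := by
        exact_mod_cast Nat.cast_le.2 (Finset.card_union_le _ _)
    _ ≤ 2 ^ m * Real.exp (-(2 * t ^ 2 / (m * c ^ 2)))
          + 2 ^ m * Real.exp (-(2 * t ^ 2 / (m * c ^ 2))) := by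
        refine add_le_add ?_ ?_
        · simpa [hμ] using hA
        · exact hB
    _ = 2 * 2 ^ m * Real.exp (-(2 * t ^ 2 / (m * c ^ 2))) := by ring

section Graphs

variable {n : ℕ}

/-- Edge slots: non-diagonal unordered pairs. -/
abbrev Slot (n : ℕ) := {e : Sym2 (Fin n) // ¬ e.IsDiag}

noncomputable def graphEquiv (n : ℕ) : SimpleGraph (Fin n) ≃ (Slot n → Bool) where
  toFun G e := @decide (e.1 ∈ G.edgeSet) (Classical.dec _)
  invFun z := SimpleGraph.fromEdgeSet {q | ∃ h : ¬ q.IsDiag, z ⟨q, h⟩ = true}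
  left_inv G := by
    ext a b
    simp only [SimpleGraph.fromEdgeSet_adj, Set.mem_setOf_eq, decide_eq_true_eq]
    constructor
    · rintro ⟨⟨h, hadj⟩, hab⟩
      exact (SimpleGraph.mem_edgeSet G).1 hadj
    · intro hadj
      exact ⟨⟨by simp [Sym2.mk_isDiag_iff, hadj.ne], (SimpleGraph.mem_edgeSet G).2 hadj⟩, hadj.ne⟩
  right_inv z := by
    funext e
    obtain ⟨q, hq⟩ := e
    have : (q ∈ (SimpleGraph.fromEdgeSet
        {q | ∃ h : ¬ q.IsDiag, z ⟨q, h⟩ = true}).edgeSet) ↔ (z ⟨q, hq⟩ = true) := by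
      rw [SimpleGraph.edgeSet_fromEdgeSet]
      constructor
      · rintro ⟨⟨h, hz⟩, -⟩
        exact hz
      · intro hz
        exact ⟨⟨hq, hz⟩, hq⟩
    simp only [this]
    exact Bool.decide_coe _

lemma graphEquiv_symm_adj (z : Slot n → Bool) (a b : Fin n) (hab : a ≠ b) :
    ((graphEquiv n).symm z).Adj a b
      ↔ z ⟨s(a, b), by simp [Sym2.mk_isDiag_iff, hab]⟩ = true := by
  show (SimpleGraph.fromEdgeSet _).Adj a b ↔ _
  rw [SimpleGraph.fromEdgeSet_adj]
  constructor
  · rintro ⟨⟨h, hz⟩, -⟩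
    exact hz
  · intro hz
    exact ⟨⟨_, hz⟩, hab⟩

/-- Counting functions to `Bool` forced to be `true` on a finset. -/
lemma card_forced (ι : Type*) [Fintype ι] [DecidableEq ι] (P : Finset ι) :
    Fintype.card {z : ι → Bool // ∀ e ∈ P, z e = true}
      = 2 ^ (Fintype.card ι - P.card) := by
  classical
  have e1 : {z : ι → Bool // ∀ e ∈ P, z e = true}
      ≃ ∀ e : ι, {b : Bool // e ∈ P → b = true} := by
    refine (Equiv.subtypeEquivRight ?_).trans Equiv.subtypePiEquivPi
    intro z
    constructor
    · intro h e he; exact h e he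
    · intro h e he; exact h e he
  rw [Fintype.card_congr e1, Fintype.card_pi]
  have hcard : ∀ e : ι, Fintype.card {b : Bool // e ∈ P → b = true}
      = if e ∈ P then 1 else 2 := by
    intro e
    by_cases he : e ∈ P
    · rw [if_pos he]
      have e2 : {b : Bool // e ∈ P → b = true} ≃ {b : Bool // b = true} :=
        Equiv.subtypeEquivRight (fun b => by simp [he])
      rw [Fintype.card_congr e2]
      exact Fintype.card_subtype_eq true
    · rw [if_neg he]
      have e2 : {b : Bool // e ∈ P → b = true} ≃ Bool :=
        (Equiv.subtypeEquivRight (fun b => by simp [he])).trans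
          (Equiv.subtypeUnivEquiv (fun b => trivial))
      rw [Fintype.card_congr e2, Fintype.card_bool]
  simp only [hcard]
  rw [Finset.prod_ite]
  simp only [Finset.prod_const_one, Finset.prod_const, one_mul]
  have hfilter : Finset.univ.filter (fun e : ι => ¬ e ∈ P) = Pᶜ := by
    ext e; simp [Finset.mem_compl]
  rw [hfilter, Finset.card_compl]

end Graphs

/-- `N_x(G)`: the number of `x`-element cliques of `G`. -/
noncomputable def numCliques {n : ℕ} (G : SimpleGraph (Fin n)) (x : ℕ) : ℕ :=
  Nat.card {S : Finset (Fin n) // S.card = x ∧ G.IsClique (S : Set (Fin n))}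

section Graphs2

variable {n : ℕ}

open Classical in
lemma numCliques_eq (G : SimpleGraph (Fin n)) (x : ℕ) :
    numCliques G x
      = (Finset.univ.filter fun S : Finset (Fin n) =>
          S.card = x ∧ G.IsClique (S : Set (Fin n))).card := by
  rw [numCliques, Nat.card_eq_fintype_card]
  convert Fintype.card_subtype _

noncomputable def slotsIn (S : Finset (Fin n)) : Finset (Slot n) :=
  Finset.univ.filter (fun e : Slot n => e.1 ∈ S.offDiag.image Sym2.mk.uncurry)

lemma slotsIn_card (S : Finset (Fin n)) : (slotsIn S).card = S.card.choose 2 := by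
  classical
  rw [← Sym2.card_image_offDiag]
  apply Finset.card_bij (fun (e : Slot n) _ => e.1)
  · intro e he
    rw [slotsIn, Finset.mem_filter] at he
    exact he.2
  · intro e1 h1 e2 h2 h
    exact Subtype.ext h
  · intro q hq
    have hd : ¬ q.IsDiag := by
      rw [Finset.mem_image] at hq
      obtain ⟨p, hp, rfl⟩ := hq
      rw [Finset.mem_offDiag] at hp
      exact (Sym2.mk_isDiag_iff).not.2 hp.2.2
    exact ⟨⟨q, hd⟩, by rw [slotsIn, Finset.mem_filter]; exact ⟨Finset.mem_univ _, hq⟩, rfl⟩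

lemma isClique_iff_slots (z : Slot n → Bool) (S : Finset (Fin n)) :
    ((graphEquiv n).symm z).IsClique (S : Set (Fin n))
      ↔ ∀ e ∈ slotsIn S, z e = true := by
  constructor
  · intro h e he
    rw [slotsIn, Finset.mem_filter, Finset.mem_image] at he
    obtain ⟨-, p, hp, hpe⟩ := he
    rw [Finset.mem_offDiag] at hp
    have hadj := h (Finset.mem_coe.2 hp.1) (Finset.mem_coe.2 hp.2.1) hp.2.2
    rw [graphEquiv_symm_adj z p.1 p.2 hp.2.2] at hadj
    have : e = ⟨s(p.1, p.2), by simp [Sym2.mk_isDiag_iff, hp.2.2]⟩ :=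
      Subtype.ext hpe.symm
    rw [this]
    exact hadj
  · intro h a ha b hb hab
    rw [graphEquiv_symm_adj z a b hab]
    apply h
    rw [slotsIn, Finset.mem_filter]
    refine ⟨Finset.mem_univ _, Finset.mem_image.2 ⟨(a, b), ?_, rfl⟩⟩
    exact Finset.mem_offDiag.2 ⟨Finset.mem_coe.1 ha, Finset.mem_coe.1 hb, hab⟩

end Graphs2

section Lip

variable {n : ℕ}

open Classical in
lemma cliques_subset_aux (x : ℕ) (z z' : Slot n → Bool) (e : Slot n)
    (hzz' : ∀ e' : Slot n, e' ≠ e → z e' = z' e') :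
    (Finset.univ.filter fun S : Finset (Fin n) =>
        S.card = x ∧ ((graphEquiv n).symm z).IsClique (S : Set (Fin n)))
      ⊆ (Finset.univ.filter fun S : Finset (Fin n) =>
          S.card = x ∧ ((graphEquiv n).symm z').IsClique (S : Set (Fin n)))
        ∪ (Finset.univ.filter fun S : Finset (Fin n) =>
            S.card = x ∧ e ∈ slotsIn S) := by
  classical
  intro S hS
  rw [Finset.mem_filter] at hS
  obtain ⟨-, hcard, hclique⟩ := hS
  rw [Finset.mem_union, Finset.mem_filter, Finset.mem_filter]
  by_cases he : e ∈ slotsIn S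
  · exact Or.inr ⟨Finset.mem_univ _, hcard, he⟩
  · refine Or.inl ⟨Finset.mem_univ _, hcard, ?_⟩
    rw [isClique_iff_slots] at hclique ⊢
    intro e' he'
    rw [← hzz' e' (fun h => he (h ▸ he'))]
    exact hclique e' he'

lemma card_slotMem_le (x : ℕ) (u v : Fin n) (huv : u ≠ v) :
    (Finset.univ.filter fun S : Finset (Fin n) =>
        S.card = x ∧ (⟨s(u,v), by simp [Sym2.mk_isDiag_iff, huv]⟩ : Slot n) ∈ slotsIn S).card
      ≤ n.choose (x - 2) := by
  classical
  have key : ∀ S : Finset (Fin n), S.card = x →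
      (⟨s(u,v), by simp [Sym2.mk_isDiag_iff, huv]⟩ : Slot n) ∈ slotsIn S →
      u ∈ S ∧ v ∈ S := by
    intro S hcard hmem
    rw [slotsIn, Finset.mem_filter, Finset.mem_image] at hmem
    obtain ⟨-, p, hp, hpe⟩ := hmem
    rw [Finset.mem_offDiag] at hp
    rcases Sym2.eq_iff.1 hpe with ⟨h1, h2⟩ | ⟨h1, h2⟩
    · rw [← h1, ← h2]; exact ⟨hp.1, hp.2.1⟩
    · rw [← h1, ← h2]; exact ⟨hp.2.1, hp.1⟩
  calc (Finset.univ.filter fun S : Finset (Fin n) =>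
        S.card = x ∧ (⟨s(u,v), by simp [Sym2.mk_isDiag_iff, huv]⟩ : Slot n) ∈ slotsIn S).card
      ≤ (Finset.univ.powersetCard (x - 2)).card := by
        apply Finset.card_le_card_of_injOn (fun S => (S.erase u).erase v)
        · intro S hS
          rw [Finset.mem_coe, Finset.mem_filter] at hS
          obtain ⟨-, hcard, hmem⟩ := hS
          obtain ⟨hu, hv⟩ := key S hcard hmem
          rw [Finset.mem_coe, Finset.mem_powersetCard_univ]
          rw [Finset.card_erase_of_mem (Finset.mem_erase.2 ⟨huv.symm, hv⟩),
            Finset.card_erase_of_mem hu, hcard]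
          omega
        · intro S1 h1 S2 h2 h
          rw [Finset.mem_coe, Finset.mem_filter] at h1 h2
          obtain ⟨hu1, hv1⟩ := key S1 h1.2.1 h1.2.2
          obtain ⟨hu2, hv2⟩ := key S2 h2.2.1 h2.2.2
          have recon : ∀ S : Finset (Fin n), u ∈ S → v ∈ S →
              insert u (insert v ((S.erase u).erase v)) = S := by
            intro S hu hv
            rw [Finset.insert_erase (Finset.mem_erase.2 ⟨huv.symm, hv⟩),
              Finset.insert_erase hu]
          have h' : (S1.erase u).erase v = (S2.erase u).erase v := h
          rw [← recon S1 hu1 hv1, ← recon S2 hu2 hv2, h']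
    _ = n.choose (x - 2) := by
        rw [Finset.card_powersetCard, Finset.card_univ, Fintype.card_fin]

end Lip

lemma numCliques_update_close {n : ℕ} (x : ℕ) (z : Slot n → Bool) (e : Slot n) (b : Bool) :
    |(numCliques ((graphEquiv n).symm (Function.update z e b)) x : ℝ)
      - (numCliques ((graphEquiv n).symm z) x : ℝ)| ≤ (n.choose (x - 2) : ℝ) := by
  classical
  obtain ⟨q, hd⟩ := e
  induction q using Sym2.ind with
  | _ u v =>
    have huv : u ≠ v := by simpa [Sym2.mk_isDiag_iff] using hd
    set e : Slot n := ⟨s(u, v), hd⟩ with he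
    have hz1 : ∀ e' : Slot n, e' ≠ e → Function.update z e b e' = z e' :=
      fun e' h => Function.update_of_ne h b z
    have h1 := cliques_subset_aux x (Function.update z e b) z e hz1
    have h2 := cliques_subset_aux x z (Function.update z e b) e (fun e' h => (hz1 e' h).symm)
    have c1 := (Finset.card_le_card h1).trans (Finset.card_union_le _ _)
    have c2 := (Finset.card_le_card h2).trans (Finset.card_union_le _ _)
    have hD : (Finset.univ.filter fun S : Finset (Fin n) =>
        S.card = x ∧ e ∈ slotsIn S).card ≤ n.choose (x - 2) := card_slotMem_le x u v huv
    rw [numCliques_eq, numCliques_eq]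
    rw [abs_sub_le_iff]
    constructor
    · have h := c1.trans (Nat.add_le_add_left hD _)
      have h' : ((Finset.univ.filter fun S : Finset (Fin n) => S.card = x ∧
          ((graphEquiv n).symm (Function.update z e b)).IsClique (S : Set (Fin n))).card : ℝ)
          ≤ ((Finset.univ.filter fun S : Finset (Fin n) => S.card = x ∧
            ((graphEquiv n).symm z).IsClique (S : Set (Fin n))).card : ℝ)
            + (n.choose (x - 2) : ℝ) := by exact_mod_cast h
      linarith
    · have h := c2.trans (Nat.add_le_add_left hD _)
      have h' : ((Finset.univ.filter fun S : Finset (Fin n) => S.card = x ∧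
          ((graphEquiv n).symm z).IsClique (S : Set (Fin n))).card : ℝ)
          ≤ ((Finset.univ.filter fun S : Finset (Fin n) => S.card = x ∧
            ((graphEquiv n).symm (Function.update z e b)).IsClique (S : Set (Fin n))).card : ℝ)
            + (n.choose (x - 2) : ℝ) := by exact_mod_cast h
      linarith

lemma card_forced' {ι : Type*} [Fintype ι] [DecidableEq ι] (P : Finset ι)
    [DecidablePred fun z : ι → Bool => ∀ e ∈ P, z e = true] :
    (Finset.univ.filter fun z : ι → Bool => ∀ e ∈ P, z e = true).card
      = 2 ^ (Fintype.card ι - P.card) := by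
  classical
  rw [← card_forced ι P]
  convert (Fintype.card_subtype _).symm using 2

open Classical in
lemma sum_numCliques {n : ℕ} (x : ℕ) :
    ∑ z : Slot n → Bool, numCliques ((graphEquiv n).symm z) x
      = n.choose x * 2 ^ (Fintype.card (Slot n) - x.choose 2) := by
  calc ∑ z : Slot n → Bool, numCliques ((graphEquiv n).symm z) x
      = ∑ z : Slot n → Bool, ∑ S : Finset (Fin n),
          if S.card = x ∧ ((graphEquiv n).symm z).IsClique (S : Set (Fin n)) then 1 else 0 := by
        refine Finset.sum_congr rfl fun z _ => ?_
        rw [numCliques_eq, Finset.card_filter]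
    _ = ∑ S : Finset (Fin n), ∑ z : Slot n → Bool,
          if S.card = x ∧ ((graphEquiv n).symm z).IsClique (S : Set (Fin n)) then 1 else 0 :=
        Finset.sum_comm
    _ = ∑ S : Finset (Fin n),
          if S.card = x then 2 ^ (Fintype.card (Slot n) - x.choose 2) else 0 := by
        refine Finset.sum_congr rfl fun S _ => ?_
        by_cases hx : S.card = x
        · rw [if_pos hx, ← Finset.card_filter]
          have hiff : ∀ z : Slot n → Bool,
              (S.card = x ∧ ((graphEquiv n).symm z).IsClique (S : Set (Fin n)))
                ↔ (∀ e ∈ slotsIn S, z e = true) := by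
            intro z
            rw [isClique_iff_slots]
            exact ⟨fun h => h.2, fun h => ⟨hx, h⟩⟩
          rw [Finset.filter_congr (fun z _ => hiff z), card_forced', slotsIn_card, hx]
        · rw [if_neg hx]
          rw [Finset.sum_eq_zero]
          intro z _
          rw [if_neg (fun h => hx h.1)]
    _ = n.choose x * 2 ^ (Fintype.card (Slot n) - x.choose 2) := by
        rw [← Finset.sum_filter]
        rw [Finset.sum_const, smul_eq_mul]
        congr 1
        have : Finset.univ.filter (fun S : Finset (Fin n) => S.card = x)
            = Finset.univ.powersetCard x := by
          ext S
          simp [Finset.mem_powersetCard_univ]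
        rw [this, Finset.card_powersetCard, Finset.card_univ, Fintype.card_fin]

lemma card_slot (n : ℕ) : Fintype.card (Slot n) = n.choose 2 := by
  rw [Sym2.card_subtype_not_diag, Fintype.card_fin]

lemma mean_eq {n x : ℕ} (hxn : x ≤ n) :
    (∑ z : Slot n → Bool, (numCliques ((graphEquiv n).symm z) x : ℝ))
        / 2 ^ (Fintype.card (Slot n))
      = (2:ℝ) ^ (-((x.choose 2 : ℕ) : ℤ)) * (n.choose x : ℝ) := by
  have h := sum_numCliques (n := n) x
  have hc2 : x.choose 2 ≤ Fintype.card (Slot n) := by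
    rw [card_slot]; exact Nat.choose_le_choose 2 hxn
  have hcast : (∑ z : Slot n → Bool, (numCliques ((graphEquiv n).symm z) x : ℝ))
      = (n.choose x : ℝ) * 2 ^ (Fintype.card (Slot n) - x.choose 2) := by
    rw [← Nat.cast_sum]
    exact_mod_cast congrArg (Nat.cast : ℕ → ℝ) h
  rw [hcast, pow_sub₀ (2:ℝ) two_ne_zero hc2, zpow_neg, zpow_natCast]
  have h1 : (2:ℝ) ^ (x.choose 2) ≠ 0 := by positivity
  have h2 : (2:ℝ) ^ (Fintype.card (Slot n)) ≠ 0 := by positivity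
  field_simp

set_option maxHeartbeats 1000000 in
lemma final_arith (ε : ℝ) (hε0 : 0 < ε) (hε1 : ε < 1) (x n m : ℕ) (hx : 2 ≤ x) (hn2 : 2 ≤ n)
    (hxn : x ≤ n) (hm : m = n.choose 2) :
    2 * Real.exp (-(2 * (Real.exp 1 * (2 - Real.log ε) * ((x:ℝ)^2 / (x.factorial : ℝ))
        * (n:ℝ) ^ (x - 1 : ℕ)) ^ 2
      / ((m : ℝ) * ((n.choose (x-2) : ℕ) : ℝ) ^ 2))) < ε := by
  have hL : 0 < -Real.log ε := by
    have := Real.log_neg hε0 hε1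
    linarith
  set Ex : ℝ := Real.exp 1 with hEx
  set L : ℝ := -Real.log ε with hLdef
  have he1 : (1:ℝ) ≤ Ex := Real.one_le_exp (by norm_num)
  have hnR : (2:ℝ) ≤ (n:ℝ) := by exact_mod_cast hn2
  have hxR : (2:ℝ) ≤ (x:ℝ) := by exact_mod_cast hx
  set P : ℝ := (n:ℝ) ^ (x - 1 : ℕ) with hP
  have hPpos : 0 < P := by positivity
  set T : ℝ := Ex * (2 - Real.log ε) * ((x:ℝ)^2 / (x.factorial : ℝ)) * P with hT
  have hfac : (0:ℝ) < (x.factorial : ℝ) := by exact_mod_cast x.factorial_pos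
  have hfac2 : (0:ℝ) < ((x-2).factorial : ℝ) := by exact_mod_cast (x-2).factorial_pos
  have hTpos : 0 < T := by
    rw [hT]
    have h2 : (0:ℝ) < 2 - Real.log ε := by linarith
    have h3 : (0:ℝ) < Ex := by linarith
    positivity
  have hmpos : (0:ℝ) < (m:ℝ) := by
    rw [hm]
    exact_mod_cast Nat.choose_pos hn2
  have hcpos : (0:ℝ) < ((n.choose (x-2) : ℕ) : ℝ) := by
    exact_mod_cast Nat.choose_pos (le_trans (Nat.sub_le x 2) (by omega))
  have hmc : (0:ℝ) < (m : ℝ) * ((n.choose (x-2) : ℕ) : ℝ) ^ 2 := by positivity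
  have hmB : (m : ℝ) ≤ (n:ℝ)^2 / 2 := by
    rw [hm, Nat.cast_choose_two]
    nlinarith
  have hcB : ((n.choose (x-2) : ℕ) : ℝ) ≤ (n:ℝ) ^ (x-2 : ℕ) / ((x-2).factorial : ℝ) :=
    Nat.choose_le_pow_div (x-2) n
  have hPsq : (n:ℝ)^2 * ((n:ℝ) ^ (x-2 : ℕ)) ^ 2 = P ^ 2 := by
    have hexp : 2 + (x-2)*2 = (x-1)*2 := by omega
    rw [hP, ← pow_mul, ← pow_mul, ← pow_add, hexp]
  have hB : (m : ℝ) * ((n.choose (x-2) : ℕ) : ℝ) ^ 2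
      ≤ P ^ 2 / (2 * ((x-2).factorial : ℝ) ^ 2) := by
    have step : (m : ℝ) * ((n.choose (x-2) : ℕ) : ℝ) ^ 2
        ≤ ((n:ℝ)^2 / 2) * ((n:ℝ) ^ (x-2 : ℕ) / ((x-2).factorial : ℝ)) ^ 2 := by
      apply mul_le_mul hmB ?_ (by positivity) (by positivity)
      exact pow_le_pow_left₀ (by positivity) hcB 2
    refine step.trans (le_of_eq ?_)
    rw [div_pow, ← hPsq]
    field_simp
  have hfacsplit : (x.factorial : ℝ) = (x:ℝ) * ((x:ℝ) - 1) * ((x-2).factorial : ℝ) := by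
    obtain ⟨k, rfl⟩ : ∃ k, x = k + 2 := ⟨x - 2, by omega⟩
    rw [show k + 2 - 2 = k by omega]
    rw [Nat.factorial_succ, Nat.factorial_succ]
    push_cast
    ring
  have hden1 : (0:ℝ) < (x:ℝ) * ((x:ℝ)-1) * ((x-2).factorial : ℝ) :=
    mul_pos (mul_pos (by linarith) (by linarith)) hfac2
  have hkey : ((x:ℝ) * ((x:ℝ)-1) * ((x-2).factorial : ℝ))^2 * (16 + 8*L)
      ≤ 4 * Ex ^ 2 * (2+L)^2 * (x:ℝ)^4 * ((x-2).factorial:ℝ)^2 := by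
    have he2 : (1:ℝ) ≤ Ex ^ 2 := by nlinarith
    have h1 : ((x:ℝ) * ((x:ℝ)-1) * ((x-2).factorial : ℝ))^2 * (16 + 8*L)
        ≤ (x:ℝ)^4 * ((x-2).factorial : ℝ)^2 * (16 + 16*L + 4*L^2) := by
      have e1 : ((x:ℝ) * ((x:ℝ)-1) * ((x-2).factorial : ℝ))^2
          = ((x:ℝ)^2 * (((x:ℝ)-1))^2) * ((x-2).factorial : ℝ)^2 := by ring
      rw [e1]
      have hxx : ((x:ℝ)-1)^2 ≤ (x:ℝ)^2 := by nlinarith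
      have hf2 : (0:ℝ) ≤ ((x-2).factorial : ℝ)^2 := by positivity
      have hx4 : (x:ℝ)^2 * ((x:ℝ)-1)^2 ≤ (x:ℝ)^4 := by nlinarith [sq_nonneg (x:ℝ)]
      have hq1 : (x:ℝ)^2 * ((x:ℝ)-1)^2 * ((x-2).factorial : ℝ)^2
          ≤ (x:ℝ)^4 * ((x-2).factorial : ℝ)^2 := mul_le_mul_of_nonneg_right hx4 hf2
      have hq2 : 16 + 8*L ≤ 16 + 16*L + 4*L^2 := by nlinarith [sq_nonneg L]
      exact mul_le_mul hq1 hq2 (by linarith) (by positivity)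
    refine h1.trans ?_
    have e3 : (16 + 16*L + 4*L^2) = 4 * (2+L)^2 := by ring
    rw [e3]
    nlinarith [mul_nonneg (mul_nonneg (by positivity : (0:ℝ) ≤ (x:ℝ)^4)
      (by positivity : (0:ℝ) ≤ ((x-2).factorial:ℝ)^2)) (sq_nonneg (2+L))]
  have hA : 16 + 8 * L ≤ 2 * T ^ 2 / ((m : ℝ) * ((n.choose (x-2) : ℕ) : ℝ) ^ 2) := by
    rw [le_div_iff₀ hmc]
    have hstep : (16 + 8*L) * ((m : ℝ) * ((n.choose (x-2) : ℕ) : ℝ) ^ 2)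
        ≤ (16 + 8*L) * (P ^ 2 / (2 * ((x-2).factorial : ℝ) ^ 2)) :=
      mul_le_mul_of_nonneg_left hB (by linarith)
    refine hstep.trans ?_
    have hTexp : T ^ 2 = Ex ^ 2 * (2 + L) ^ 2 * ((x:ℝ)^4 / (x.factorial : ℝ)^2) * P ^ 2 := by
      rw [hT]
      have h22 : (2:ℝ) - Real.log ε = 2 + L := by rw [hLdef]; ring
      rw [h22]
      field_simp
    rw [hTexp, hfacsplit]
    rw [← sub_nonneg]
    have expand : 2 * (Ex ^ 2 * (2 + L) ^ 2
          * ((x:ℝ)^4 / ((x:ℝ) * ((x:ℝ)-1) * ((x-2).factorial : ℝ))^2) * P ^ 2)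
        - (16 + 8*L) * (P ^ 2 / (2 * ((x-2).factorial : ℝ) ^ 2))
        = ((4 * Ex ^ 2 * (2+L)^2 * (x:ℝ)^4 * ((x-2).factorial:ℝ)^2
            - ((x:ℝ) * ((x:ℝ)-1) * ((x-2).factorial : ℝ))^2 * (16 + 8*L)) * P^2)
          / (2 * ((x-2).factorial : ℝ)^2 * ((x:ℝ) * ((x:ℝ)-1) * ((x-2).factorial : ℝ))^2) := by
      have hx1ne : (x:ℝ) - 1 ≠ 0 := by linarith
      field_simp
      ring
    rw [expand]
    apply div_nonneg _ (by positivity)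
    exact mul_nonneg (by linarith) (sq_nonneg P)
  have hlt : Real.log 2 + L < 2 * T ^ 2 / ((m : ℝ) * ((n.choose (x-2) : ℕ) : ℝ) ^ 2) := by
    have h2 : Real.log 2 < 1 := by
      have := Real.log_two_lt_d9
      linarith
    linarith
  have hexp : Real.exp (-(2 * T ^ 2 / ((m : ℝ) * ((n.choose (x-2) : ℕ) : ℝ) ^ 2))) < ε / 2 := by
    have hlog : -(2 * T ^ 2 / ((m : ℝ) * ((n.choose (x-2) : ℕ) : ℝ) ^ 2)) < Real.log (ε / 2) := by
      rw [Real.log_div (ne_of_gt hε0) two_ne_zero]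
      rw [hLdef] at hlt
      linarith
    calc Real.exp (-(2 * T ^ 2 / ((m : ℝ) * ((n.choose (x-2) : ℕ) : ℝ) ^ 2)))
        < Real.exp (Real.log (ε / 2)) := Real.exp_lt_exp.2 hlog
      _ = ε / 2 := Real.exp_log (by positivity)
  linarith

lemma card_filter_card_eq (n x : ℕ) :
    (Finset.univ.filter fun S : Finset (Fin n) => S.card = x).card = n.choose x := by
  have h : Finset.univ.filter (fun S : Finset (Fin n) => S.card = x)
      = Finset.univ.powersetCard x := by
    ext S
    simp [Finset.mem_powersetCard_univ]
  rw [h, Finset.card_powersetCard, Finset.card_univ, Fintype.card_fin]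

lemma numCliques_of_le_one {n x : ℕ} (hx : x ≤ 1) (G : SimpleGraph (Fin n)) :
    numCliques G x = n.choose x := by
  classical
  rw [numCliques_eq]
  rw [← card_filter_card_eq n x]
  congr 1
  apply Finset.filter_congr
  intro S _
  constructor
  · exact fun h => h.1
  · intro h
    refine ⟨h, ?_⟩
    have hsub : (S : Set (Fin n)).Subsingleton := by
      intro a ha b hb
      exact Finset.card_le_one.1 (by omega) a ha b hb
    exact hsub.pairwise _

/-- For every `ε ∈ (0,1)` and every nonnegative integer `x`, if
`n > x²·(2e − e·ln ε)·(2e + 2 − e·ln ε)`, then for `G ← G(n,1/2)` (uniform over all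
graphs on `[n]`), the probability that
`|N_x(G) − 2^{−C(x,2)}·C(n,x)| > e·(2 − ln ε)·(x²/x!)·n^{x−1}` is less than `ε`. -/
theorem numCliques_concentration (ε : ℝ) (hε : ε ∈ Set.Ioo (0 : ℝ) 1) (x n : ℕ)
    (hn : (x : ℝ) ^ 2 * (2 * Real.exp 1 - Real.exp 1 * Real.log ε)
        * (2 * Real.exp 1 + 2 - Real.exp 1 * Real.log ε) < (n : ℝ)) :
    (Nat.card {G : SimpleGraph (Fin n) //
        Real.exp 1 * (2 - Real.log ε) * ((x : ℝ) ^ 2 / (Nat.factorial x : ℝ))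
            * (n : ℝ) ^ ((x : ℝ) - 1)
          < |(numCliques G x : ℝ)
              - (2 : ℝ) ^ (-((Nat.choose x 2 : ℕ) : ℤ)) * (Nat.choose n x : ℝ)|} : ℝ)
      / (Nat.card (SimpleGraph (Fin n)) : ℝ) < ε := by
  classical
  obtain ⟨hε0, hε1⟩ := hε
  have hlog : Real.log ε < 0 := Real.log_neg hε0 hε1
  by_cases hx1 : x ≤ 1
  · -- trivial case : the deviation is zero
    have hc2 : x.choose 2 = 0 := Nat.choose_eq_zero_of_lt (by omega)
    have hempty : IsEmpty {G : SimpleGraph (Fin n) //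
        Real.exp 1 * (2 - Real.log ε) * ((x : ℝ) ^ 2 / (Nat.factorial x : ℝ))
            * (n : ℝ) ^ ((x : ℝ) - 1)
          < |(numCliques G x : ℝ)
              - (2 : ℝ) ^ (-((Nat.choose x 2 : ℕ) : ℤ)) * (Nat.choose n x : ℝ)|} := by
      refine ⟨fun ⟨G, hG⟩ => ?_⟩
      rw [numCliques_of_le_one hx1, hc2] at hG
      simp only [Nat.cast_zero, neg_zero, zpow_zero, one_mul, sub_self, abs_zero] at hG
      have hT : 0 ≤ Real.exp 1 * (2 - Real.log ε) * ((x : ℝ) ^ 2 / (Nat.factorial x : ℝ))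
          * (n : ℝ) ^ ((x : ℝ) - 1) := by
        apply mul_nonneg
        apply mul_nonneg
        apply mul_nonneg (le_of_lt (Real.exp_pos 1)) (by linarith)
        · positivity
        · exact Real.rpow_nonneg (Nat.cast_nonneg n) _
      exact absurd hG (not_lt.2 hT)
    rw [Nat.card_of_isEmpty, Nat.cast_zero, zero_div]
    exact hε0
  · -- main case
    push_neg at hx1
    have hx2 : 2 ≤ x := hx1
    have hxR : (2:ℝ) ≤ (x:ℝ) := by exact_mod_cast hx2
    -- numeric consequences of hn
    have heR : (2:ℝ) < Real.exp 1 := by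
      have := Real.exp_one_gt_d9
      linarith
    have hA1 : (2 * Real.exp 1 : ℝ) ≤ 2 * Real.exp 1 - Real.exp 1 * Real.log ε := by
      nlinarith [Real.exp_pos 1]
    have hA2 : (2 * Real.exp 1 + 2 : ℝ) ≤ 2 * Real.exp 1 + 2 - Real.exp 1 * Real.log ε := by
      nlinarith [Real.exp_pos 1]
    have hnbig : (x:ℝ)^2 * (2 * Real.exp 1) * (2 * Real.exp 1 + 2) < (n:ℝ) := by
      refine lt_of_le_of_lt ?_ hn
      have hA0 : (0:ℝ) ≤ (x:ℝ)^2 * (2 * Real.exp 1) := by positivity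
      apply mul_le_mul (mul_le_mul_of_nonneg_left hA1 (sq_nonneg (x:ℝ))) hA2 (by linarith) ?_
      apply mul_nonneg (sq_nonneg _)
      linarith
    have hp1 : (4:ℝ) ≤ (x:ℝ)^2 := by nlinarith
    have hp2 : (4:ℝ) ≤ 2 * Real.exp 1 := by linarith
    have hp3 : (6:ℝ) ≤ 2 * Real.exp 1 + 2 := by linarith
    have hq1 : (16:ℝ) ≤ (x:ℝ)^2 * (2 * Real.exp 1) := by nlinarith
    have hq2 : (96:ℝ) ≤ (x:ℝ)^2 * (2 * Real.exp 1) * (2 * Real.exp 1 + 2) := by nlinarith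
    have hnR : (2:ℝ) < (n:ℝ) := by linarith
    have hn2 : 2 ≤ n := by exact_mod_cast hnR.le
    have hxnR : (x:ℝ) < (n:ℝ) := by
      have hxx : (x:ℝ) ≤ (x:ℝ)^2 := by nlinarith
      nlinarith [mul_le_mul hq1 hp3 (by norm_num) (by linarith)]
    have hxn : x ≤ n := by exact_mod_cast hxnR.le
    -- set up the cube
    set m' : ℕ := Fintype.card (Slot n) with hm'
    have hmchoose : m' = n.choose 2 := card_slot n
    have hm'pos : 0 < m' := by
      rw [hmchoose]
      exact Nat.choose_pos hn2
    set e0 : Slot n ≃ Fin m' := Fintype.equivFin (Slot n) with he0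
    set f : (Fin m' → Bool) → ℝ :=
      fun w => (numCliques ((graphEquiv n).symm (w ∘ e0)) x : ℝ) with hf
    set c : ℝ := ((n.choose (x-2) : ℕ) : ℝ) with hc
    have hcpos : (0:ℝ) < c := by
      rw [hc]
      exact_mod_cast Nat.choose_pos (le_trans (Nat.sub_le x 2) hxn)
    -- threshold, with natural-number exponent
    have hrpow : (n:ℝ) ^ ((x:ℝ) - 1) = (n:ℝ) ^ (x - 1 : ℕ) := by
      rw [show ((x:ℝ) - 1) = ((x - 1 : ℕ) : ℝ) by
        rw [Nat.cast_sub (by omega)]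
        norm_num]
      exact Real.rpow_natCast _ _
    set T : ℝ := Real.exp 1 * (2 - Real.log ε) * ((x : ℝ) ^ 2 / (Nat.factorial x : ℝ))
        * (n:ℝ) ^ (x - 1 : ℕ) with hT
    have hTpos : 0 < T := by
      rw [hT]
      have h2 : (0:ℝ) < 2 - Real.log ε := by linarith
      have h3 : (0:ℝ) < (x:ℝ)^2 := by positivity
      have h4 : (0:ℝ) < (Nat.factorial x : ℝ) := by exact_mod_cast x.factorial_pos
      have h5 : (0:ℝ) < (n:ℝ) ^ (x-1:ℕ) := by positivity
      positivity
    -- Lipschitz property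
    have hlip : ∀ (w : Fin m' → Bool) (i : Fin m') (b : Bool),
        |f w - f (Function.update w i b)| ≤ c := by
      intro w i b
      rw [hf]
      simp only
      rw [abs_sub_comm]
      have hcomp : Function.update w i b ∘ e0 = Function.update (w ∘ e0) (e0.symm i) b :=
        Function.update_comp_equiv w e0 i b
      rw [hcomp, hc]
      exact numCliques_update_close x (w ∘ e0) (e0.symm i) b
    -- the mean
    have hμ : (∑ w : Fin m' → Bool, f w) / 2 ^ m'
        = (2:ℝ) ^ (-((x.choose 2 : ℕ) : ℤ)) * (n.choose x : ℝ) := by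
      have hsum : ∑ w : Fin m' → Bool, f w
          = ∑ z : Slot n → Bool, (numCliques ((graphEquiv n).symm z) x : ℝ) := by
        rw [← Equiv.sum_comp (Equiv.arrowCongr e0 (Equiv.refl Bool)).symm
          (fun z : Slot n → Bool => (numCliques ((graphEquiv n).symm z) x : ℝ))]
        refine Finset.sum_congr rfl fun w _ => ?_
        rw [hf]
        congr 1
      rw [hsum]
      exact mean_eq hxn
    -- the equivalence of events
    set Φ : SimpleGraph (Fin n) ≃ (Fin m' → Bool) :=
      (graphEquiv n).trans (Equiv.arrowCongr e0 (Equiv.refl Bool)) with hΦ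
    have hfΦ : ∀ G : SimpleGraph (Fin n), f (Φ G) = (numCliques G x : ℝ) := by
      intro G
      rw [hf]
      simp only
      have : (Φ G) ∘ e0 = graphEquiv n G := by
        funext i
        rw [hΦ]
        simp [Equiv.arrowCongr]
      rw [this, Equiv.symm_apply_apply]
    have hcount : (Nat.card {G : SimpleGraph (Fin n) //
        Real.exp 1 * (2 - Real.log ε) * ((x : ℝ) ^ 2 / (Nat.factorial x : ℝ))
            * (n : ℝ) ^ ((x : ℝ) - 1)
          < |(numCliques G x : ℝ)
              - (2 : ℝ) ^ (-((Nat.choose x 2 : ℕ) : ℤ)) * (Nat.choose n x : ℝ)|})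
        = (Finset.univ.filter fun w : Fin m' → Bool =>
            T < |f w - (∑ v : Fin m' → Bool, f v) / 2 ^ m'|).card := by
      have hequiv : {G : SimpleGraph (Fin n) //
          Real.exp 1 * (2 - Real.log ε) * ((x : ℝ) ^ 2 / (Nat.factorial x : ℝ))
              * (n : ℝ) ^ ((x : ℝ) - 1)
            < |(numCliques G x : ℝ)
                - (2 : ℝ) ^ (-((Nat.choose x 2 : ℕ) : ℤ)) * (Nat.choose n x : ℝ)|}
          ≃ {w : Fin m' → Bool //
              T < |f w - (∑ v : Fin m' → Bool, f v) / 2 ^ m'|} := by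
        refine Equiv.subtypeEquiv Φ fun G => ?_
        rw [hfΦ G, hμ, hrpow, ← hT]
      rw [Nat.card_congr hequiv, Nat.card_eq_fintype_card, Fintype.card_subtype]
    have htotal : (Nat.card (SimpleGraph (Fin n)) : ℝ) = 2 ^ m' := by
      rw [Nat.card_congr Φ, Nat.card_eq_fintype_card]
      rw [Fintype.card_fun, Fintype.card_bool, Fintype.card_fin]
      norm_num
    -- apply the tail bound
    have htail := cube_tail m' c T f hm'pos hcpos hTpos hlip
    have hfinal := final_arith ε hε0 hε1 x n m' hx2 hn2 hxn hmchoose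
    rw [← hT, ← hc] at hfinal
    rw [hcount, htotal]
    have h2m : (0:ℝ) < 2 ^ m' := by positivity
    calc ((Finset.univ.filter fun w : Fin m' → Bool =>
            T < |f w - (∑ v : Fin m' → Bool, f v) / 2 ^ m'|).card : ℝ) / 2 ^ m'
        ≤ (2 * 2 ^ m' * Real.exp (-(2 * T ^ 2 / (m' * c ^ 2)))) / 2 ^ m' := by
          gcongr
      _ = 2 * Real.exp (-(2 * T ^ 2 / (m' * c ^ 2))) := by
          field_simp
          try ring
      _ < ε := hfinal
end
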